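/- arXiv:2501.17516 — 4 statements merged into one kernel-verified Lean document; each statement's English description precedes it below -/
import Mathlib

section
/- Formal solution at the irregular singularity (Proposition 2.2): assume each diagonal block A_{11}, …, A_{νν} of A is non-resonant. Then there exists a unique sequence (H_p)_{p≥0} of complex n×n matrices with H_0 = I such that for every integer p ≥ 0: u·H_{p+1} − H_{p+1}·u = H_p·(δ_u A) − A·H_p − p·H_p. (This recursion is exactly the condition that F(z) = (I + Σ_{p≥1} H_p z^{−p})·z^{δ_u A}·e^{uz} is the unique formal fundamental solution of the confluent hypergeometric system at z = ∞.) -/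
/-!
Statement 7 (Proposition 2.2): existence and uniqueness of the formal fundamental
solution of the confluent hypergeometric system at the irregular singularity
`z = ∞`, assuming the diagonal blocks of `A` are non-resonant.
-/

noncomputable section
open Matrix Polynomial Pointwise

/-- A square complex matrix is non-resonant if the difference of any two of its
eigenvalues is never a nonzero integer. -/
def NonResonant {m : Type*} [Fintype m] [DecidableEq m] (M : Matrix m m ℂ) : Prop :=
  ∀ a ∈ spectrum ℂ M, ∀ b ∈ spectrum ℂ M, ∀ k : ℤ, a - b = (k : ℂ) → k = 0

/-- The `k`-th diagonal block `A_{kk}` of a `ν×ν`-blocked matrix. -/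
def diagBlock {ν : ℕ} {n : Fin ν → ℕ}
    (A : Matrix (Σ k : Fin ν, Fin (n k)) (Σ k : Fin ν, Fin (n k)) ℂ) (k : Fin ν) :
    Matrix (Fin (n k)) (Fin (n k)) ℂ :=
  Matrix.of fun a b => A ⟨k, a⟩ ⟨k, b⟩

/-- The block-diagonal part `δ_u A = diag(A_{11}, …, A_{νν})`. -/
def blockDiagPart {ν : ℕ} {n : Fin ν → ℕ}
    (A : Matrix (Σ k : Fin ν, Fin (n k)) (Σ k : Fin ν, Fin (n k)) ℂ) :
    Matrix (Σ k : Fin ν, Fin (n k)) (Σ k : Fin ν, Fin (n k)) ℂ :=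
  Matrix.of fun i j => if i.1 = j.1 then A i j else 0

/-- The diagonal matrix `u = diag(u_1 I_{n_1}, …, u_ν I_{n_ν})`. -/
def uDiag {ν : ℕ} (n : Fin ν → ℕ) (c : Fin ν → ℂ) :
    Matrix (Σ k : Fin ν, Fin (n k)) (Σ k : Fin ν, Fin (n k)) ℂ :=
  Matrix.diagonal fun i => c i.1

section Helpers
variable {m : Type*} [Fintype m] [DecidableEq m]


lemma root_charpoly_mem_spectrum (M : Matrix m m ℂ) (z : ℂ)
    (h : (Matrix.charpoly M).eval z = 0) : z ∈ spectrum ℂ M := by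
  rw [spectrum.mem_iff]
  intro hu
  rw [Matrix.isUnit_iff_isUnit_det] at hu
  have hdet : (algebraMap ℂ (Matrix m m ℂ) z - M).det = (Matrix.charpoly M).eval z := by
    rw [Matrix.charpoly, ← Polynomial.coe_evalRingHom, RingHom.map_det]
    congr 1
    ext i j
    by_cases hij : i = j <;>
      simp [hij, Matrix.charmatrix_apply, Matrix.algebraMap_matrix_apply, Matrix.sub_apply,
        Matrix.diagonal_apply]
  rw [hdet, h] at hu
  exact hu.ne_zero rfl

lemma sylvester_eq_zero (B : Matrix m m ℂ) (hB : NonResonant B) (q : ℕ) (hq : 1 ≤ q)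
    (X : Matrix m m ℂ) (hX : X * B - B * X - (q : ℂ) • X = 0) : X = 0 := by
  cases isEmpty_or_nonempty m with
  | inl he => ext i; exact he.elim i
  | inr hne =>
  set C : Matrix m m ℂ := algebraMap ℂ _ (q : ℂ) + B with hC
  have hcomm : X * B = C * X := by
    have h1 : X * B = B * X + (q : ℂ) • X := by
      have h2 := hX
      rw [sub_sub, sub_eq_zero] at h2
      exact h2
    rw [h1, hC, add_mul, Algebra.algebraMap_eq_smul_one, smul_mul_assoc, one_mul]
    abel
  have hpow : ∀ t : ℕ, X * B ^ t = C ^ t * X := by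
    intro t
    induction t with
    | zero => simp
    | succ t ih =>
        rw [pow_succ, pow_succ, ← mul_assoc, ih, mul_assoc, hcomm, ← mul_assoc]
  have hpoly : ∀ r : ℂ[X], X * aeval B r = aeval C r * X := by
    intro r
    rw [aeval_eq_sum_range (p := r) B, aeval_eq_sum_range (p := r) C,
      Finset.mul_sum, Finset.sum_mul]
    refine Finset.sum_congr rfl fun i _ => ?_
    rw [mul_smul_comm, smul_mul_assoc, hpow]
  have hzero : X * aeval B C.charpoly = 0 := by
    rw [hpoly, Matrix.aeval_self_charpoly, zero_mul]
  have hunit : IsUnit (aeval B C.charpoly) := by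
    by_contra hu
    have h0 : (0 : ℂ) ∈ spectrum ℂ (aeval B C.charpoly) := (spectrum.zero_mem_iff ℂ).mpr hu
    have hdeg : 0 < C.charpoly.degree := by
      rw [Matrix.charpoly_degree_eq_dim]
      exact_mod_cast Fintype.card_pos
    rw [spectrum.map_polynomial_aeval_of_degree_pos B C.charpoly hdeg] at h0
    obtain ⟨z, hz, hz0⟩ := h0
    have hzC : z ∈ spectrum ℂ C := root_charpoly_mem_spectrum C z hz0
    have : z ∈ ({(q : ℂ)} : Set ℂ) + spectrum ℂ B := by
      rw [spectrum.singleton_add_eq]; exact hzC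
    obtain ⟨a, ha, b, hb, hab⟩ := Set.mem_add.mp this
    rw [Set.mem_singleton_iff] at ha
    have : ((q : ℤ) : ℂ) = z - b := by
      rw [← hab, ha]; push_cast; ring
    have := hB z hz b hb (q : ℤ) this.symm
    omega
  obtain ⟨u, hu⟩ := hunit
  have := hzero
  rw [← hu] at this
  exact (Units.mul_left_eq_zero u).mp this

end Helpers

namespace FFS

variable {ν : ℕ} {n : Fin ν → ℕ}

local notation "Mat" => Matrix (Σ k : Fin ν, Fin (n k)) (Σ k : Fin ν, Fin (n k)) ℂ

/-- `blockDiagPart` as a linear map. -/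
def bdLin : Mat →ₗ[ℂ] Mat where
  toFun := blockDiagPart
  map_add' X Y := by
    ext i j
    simp only [blockDiagPart, Matrix.of_apply, Matrix.add_apply]
    split <;> simp
  map_smul' a X := by
    ext i j
    simp only [blockDiagPart, Matrix.of_apply, Matrix.smul_apply, RingHom.id_apply]
    split <;> simp

lemma bdLin_apply (X : Mat) : bdLin X = blockDiagPart X := rfl

lemma bdLin_idem (X : Mat) : bdLin (bdLin X) = bdLin X := by
  ext i j
  simp only [bdLin_apply, blockDiagPart, Matrix.of_apply]
  split <;> simp_all

/-- The right-hand-side operator `X ↦ X·δA − A·X − p·X`. -/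
def RhsL (A : Mat) (p : ℕ) : Mat →ₗ[ℂ] Mat :=
  LinearMap.mulRight ℂ (blockDiagPart A) - LinearMap.mulLeft ℂ A - (p : ℂ) • LinearMap.id

lemma RhsL_apply (A : Mat) (p : ℕ) (X : Mat) :
    RhsL A p X = X * blockDiagPart A - A * X - (p : ℂ) • X := by
  simp [RhsL]

/-- The operator `X ↦ uX − Xu + δ(X·δA − A·X − q·X)`. -/
def Tmap (c : Fin ν → ℂ) (A : Mat) (q : ℕ) : Mat →ₗ[ℂ] Mat :=
  LinearMap.mulLeft ℂ (uDiag n c) - LinearMap.mulRight ℂ (uDiag n c) + bdLin ∘ₗ RhsL A q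

lemma Tmap_apply (c : Fin ν → ℂ) (A : Mat) (q : ℕ) (X : Mat) :
    Tmap c A q X = (uDiag n c * X - X * uDiag n c) + bdLin (RhsL A q X) := by
  simp [Tmap]

lemma bd_comm_zero (c : Fin ν → ℂ) (X : Mat) :
    bdLin (uDiag n c * X - X * uDiag n c) = 0 := by
  ext i j
  simp only [bdLin_apply, blockDiagPart, Matrix.of_apply, Matrix.sub_apply, uDiag,
    Matrix.diagonal_mul, Matrix.mul_diagonal, Matrix.zero_apply]
  split
  · rename_i h; rw [h]; ring
  · rfl

lemma Tmap_injective (c : Fin ν → ℂ) (hc : Function.Injective c) (A : Mat)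
    (hA : ∀ k : Fin ν, NonResonant (diagBlock A k)) (q : ℕ) (hq : 1 ≤ q) :
    Function.Injective (Tmap c A q) := by
  rw [← LinearMap.ker_eq_bot, LinearMap.ker_eq_bot']
  intro X hX0
  have hentry : ∀ i j : (Σ k : Fin ν, Fin (n k)),
      (c i.1 * X i j - X i j * c j.1)
        + (if i.1 = j.1 then (X * blockDiagPart A - A * X - (q : ℂ) • X) i j else 0) = 0 := by
    intro i j
    have h : (Tmap c A q X) i j = (0 : Mat) i j := by rw [hX0]
    rw [Tmap_apply, RhsL_apply] at h
    simpa [bdLin_apply, blockDiagPart, uDiag, Matrix.diagonal_mul, Matrix.mul_diagonal] using h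
  have hoff : ∀ i j : (Σ k : Fin ν, Fin (n k)), i.1 ≠ j.1 → X i j = 0 := by
    intro i j hij
    have h := hentry i j
    rw [if_neg hij, add_zero] at h
    have hcc : c i.1 - c j.1 ≠ 0 := sub_ne_zero.mpr fun hcc => hij (hc hcc)
    have : (c i.1 - c j.1) * X i j = 0 := by linear_combination h
    exact (mul_eq_zero.mp this).resolve_left hcc
  have hdiag : ∀ i j : (Σ k : Fin ν, Fin (n k)), i.1 = j.1 →
      (X * blockDiagPart A - A * X - (q : ℂ) • X) i j = 0 := by
    intro i j hij
    have h := hentry i j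
    rw [if_pos hij, hij] at h
    have : X i j * c j.1 - X i j * c j.1 = 0 := by ring
    linear_combination h
  have hblk : ∀ k : Fin ν, diagBlock X k = 0 := by
    intro k
    apply sylvester_eq_zero (diagBlock A k) (hA k) q hq
    ext a b
    have h := hdiag ⟨k, a⟩ ⟨k, b⟩ rfl
    have e1 : ∑ j : (Σ l : Fin ν, Fin (n l)), X ⟨k, a⟩ j * blockDiagPart A j ⟨k, b⟩
        = ∑ t : Fin (n k), X ⟨k, a⟩ ⟨k, t⟩ * A ⟨k, t⟩ ⟨k, b⟩ := by
      rw [← Finset.univ_sigma_univ, Finset.sum_sigma]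
      rw [Finset.sum_eq_single_of_mem k (Finset.mem_univ k)]
      · refine Finset.sum_congr rfl fun t _ => ?_
        simp [blockDiagPart]
      · intro l _ hl
        apply Finset.sum_eq_zero
        intro t _
        simp [blockDiagPart, hl]
    have e2 : ∑ j : (Σ l : Fin ν, Fin (n l)), A ⟨k, a⟩ j * X j ⟨k, b⟩
        = ∑ t : Fin (n k), A ⟨k, a⟩ ⟨k, t⟩ * X ⟨k, t⟩ ⟨k, b⟩ := by
      rw [← Finset.univ_sigma_univ, Finset.sum_sigma]
      rw [Finset.sum_eq_single_of_mem k (Finset.mem_univ k)]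
      · intro l _ hl
        apply Finset.sum_eq_zero
        intro t _
        rw [hoff ⟨l, t⟩ ⟨k, b⟩ hl, mul_zero]
    simp only [Matrix.sub_apply, Matrix.mul_apply, Matrix.smul_apply, smul_eq_mul,
      Matrix.zero_apply] at h ⊢
    rw [e1, e2] at h
    simpa [diagBlock, Matrix.mul_apply] using h
  ext i j
  rcases i with ⟨k, a⟩
  rcases j with ⟨l, b⟩
  by_cases hkl : k = l
  · subst hkl
    have := congrFun (congrFun (congrArg (fun M => (M : Matrix (Fin (n k)) (Fin (n k)) ℂ)) (hblk k)) a) b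
    simpa [diagBlock] using this
  · exact hoff ⟨k, a⟩ ⟨l, b⟩ hkl

lemma Tmap_bijective (c : Fin ν → ℂ) (hc : Function.Injective c) (A : Mat)
    (hA : ∀ k : Fin ν, NonResonant (diagBlock A k)) (q : ℕ) (hq : 1 ≤ q) :
    Function.Bijective (Tmap c A q) :=
  ⟨Tmap_injective c hc A hA q hq,
   LinearMap.injective_iff_surjective.mp (Tmap_injective c hc A hA q hq)⟩

/-- The bijective operator `T_{p+1}` as an equivalence. -/
def Teq (c : Fin ν → ℂ) (hc : Function.Injective c) (A : Mat)
    (hA : ∀ k : Fin ν, NonResonant (diagBlock A k)) (p : ℕ) : Mat ≃ Mat :=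
  Equiv.ofBijective (Tmap c A (p + 1)) (Tmap_bijective c hc A hA (p + 1) p.succ_pos)

/-- The sequence of coefficients of the formal fundamental solution. -/
def Hseq (c : Fin ν → ℂ) (hc : Function.Injective c) (A : Mat)
    (hA : ∀ k : Fin ν, NonResonant (diagBlock A k)) : ℕ → Mat
  | 0 => 1
  | p + 1 => (Teq c hc A hA p).symm (RhsL A p (Hseq c hc A hA p))

lemma Hseq_zero (c : Fin ν → ℂ) (hc : Function.Injective c) (A : Mat)
    (hA : ∀ k : Fin ν, NonResonant (diagBlock A k)) : Hseq c hc A hA 0 = 1 := rfl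

lemma Tmap_Hseq (c : Fin ν → ℂ) (hc : Function.Injective c) (A : Mat)
    (hA : ∀ k : Fin ν, NonResonant (diagBlock A k)) (p : ℕ) :
    Tmap c A (p + 1) (Hseq c hc A hA (p + 1)) = RhsL A p (Hseq c hc A hA p) := by
  show Teq c hc A hA p (Hseq c hc A hA (p + 1)) = _
  rw [show Hseq c hc A hA (p + 1)
      = (Teq c hc A hA p).symm (RhsL A p (Hseq c hc A hA p)) from rfl]
  exact (Teq c hc A hA p).apply_symm_apply _

lemma Hseq_invariant (c : Fin ν → ℂ) (hc : Function.Injective c) (A : Mat)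
    (hA : ∀ k : Fin ν, NonResonant (diagBlock A k)) (p : ℕ) :
    bdLin (RhsL A p (Hseq c hc A hA p)) = 0 := by
  induction p with
  | zero =>
      ext i j
      simp only [Hseq_zero, RhsL_apply, bdLin_apply, blockDiagPart, Matrix.of_apply,
        Matrix.sub_apply, Matrix.smul_apply, Matrix.mul_one, Matrix.one_mul,
        Nat.cast_zero, zero_smul, sub_zero, Matrix.zero_apply]
      split
      · rename_i h; simp [h]
      · rfl
  | succ p ih =>
      have h := congrArg (fun Y => bdLin Y) (Tmap_Hseq c hc A hA p)
      simp only [Tmap_apply, map_add, bd_comm_zero, bdLin_idem, zero_add] at h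
      rw [h, ih]

lemma Hseq_rec (c : Fin ν → ℂ) (hc : Function.Injective c) (A : Mat)
    (hA : ∀ k : Fin ν, NonResonant (diagBlock A k)) (p : ℕ) :
    uDiag n c * Hseq c hc A hA (p + 1) - Hseq c hc A hA (p + 1) * uDiag n c
      = RhsL A p (Hseq c hc A hA p) := by
  have h := Tmap_Hseq c hc A hA p
  rw [Tmap_apply, Hseq_invariant c hc A hA (p + 1), add_zero] at h
  exact h

lemma Hseq_unique (c : Fin ν → ℂ) (hc : Function.Injective c) (A : Mat)
    (hA : ∀ k : Fin ν, NonResonant (diagBlock A k)) (G : ℕ → Mat) (hG0 : G 0 = 1)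
    (hGrec : ∀ p : ℕ, uDiag n c * G (p + 1) - G (p + 1) * uDiag n c = RhsL A p (G p)) :
    ∀ p : ℕ, G p = Hseq c hc A hA p := by
  intro p
  induction p with
  | zero => rw [hG0, Hseq_zero]
  | succ p ih =>
      have hbdG : bdLin (RhsL A (p + 1) (G (p + 1))) = 0 := by
        rw [← hGrec (p + 1), bd_comm_zero]
      have hT : Tmap c A (p + 1) (G (p + 1)) = RhsL A p (Hseq c hc A hA p) := by
        rw [Tmap_apply, hbdG, add_zero, hGrec p, ih]
      have h2 : (Teq c hc A hA p) (G (p + 1)) = RhsL A p (Hseq c hc A hA p) := hT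
      calc G (p + 1) = (Teq c hc A hA p).symm ((Teq c hc A hA p) (G (p + 1))) :=
            ((Teq c hc A hA p).symm_apply_apply _).symm
        _ = Hseq c hc A hA (p + 1) := by rw [h2]; rfl

end FFS

/-- **Proposition 2.2.** If every diagonal block `A_{kk}` is
non-resonant then there is a unique sequence `(H_p)` with `H_0 = I` and
`u·H_{p+1} − H_{p+1}·u = H_p·(δ_u A) − A·H_p − p·H_p` for all `p ≥ 0`;
these are the coefficients of the unique formal fundamental solution
`F(z) = (I + Σ_{p≥1} H_p z^{−p})·z^{δ_u A}·e^{uz}` at `z = ∞`. -/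
theorem formal_fundamental_solution_at_infinity
    (ν : ℕ) (hν : 1 ≤ ν) (n : Fin ν → ℕ) (c : Fin ν → ℂ) (hc : Function.Injective c)
    (A : Matrix (Σ k : Fin ν, Fin (n k)) (Σ k : Fin ν, Fin (n k)) ℂ)
    (hA : ∀ k : Fin ν, NonResonant (diagBlock A k)) :
    ∃! H : ℕ → Matrix (Σ k : Fin ν, Fin (n k)) (Σ k : Fin ν, Fin (n k)) ℂ,
      H 0 = 1 ∧
      ∀ p : ℕ,
        uDiag n c * H (p + 1) - H (p + 1) * uDiag n c
          = H p * blockDiagPart A - A * H p - (p : ℂ) • H p := by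
  refine ⟨FFS.Hseq c hc A hA, ⟨FFS.Hseq_zero c hc A hA, fun p => ?_⟩, fun G hG => ?_⟩
  · rw [← FFS.RhsL_apply]
    exact FFS.Hseq_rec c hc A hA p
  · funext p
    refine FFS.Hseq_unique c hc A hA G hG.1 (fun q => ?_) p
    rw [FFS.RhsL_apply]
    exact hG.2 q


end
end

section
/- The analytic Laplace transform computes the formal Laplace transform (Lemma 2.10, in the regime where all exponents have positive real part): let u_0 ∈ ℂ, d ∈ ℝ, s ∈ ℂ with Re s < 0, and let (a_p)_{p≥0} be complex numbers such that the power series Σ_{p≥0} a_p·Γ(p−s)·w^p has radius of convergence at least r for some r > 0. Then for every ξ ∈ ℂ with Re((ξ − u_0)·e^{id}) > 1/r: (i) the series f(t) := Σ_{p≥0} a_p·t^{p−s}·e^{id(p−s)}·e^{u_0·t·e^{id}} converges for every t > 0; (ii) the integral ∫_0^∞ f(t)·e^{−ξ·t·e^{id}}·dt/t converges absolutely (this is the analytic Laplace transform in direction d, with z = t·e^{id}); and (iii) its value equals Σ_{p≥0} a_p·Γ(p−s)·(ξ−u_0)^{s−p}, where (ξ−u_0)^{s−p} := exp((s−p)·(log|ξ−u_0|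 + iθ)) and θ is the unique real number with ξ−u_0 = |ξ−u_0|·e^{iθ} and θ + d ∈ (−π/2, π/2). -/
/-!
Statement 12 (Lemma 2.10): the analytic Laplace transform in direction `d`
computes the formal Laplace transform.
-/

noncomputable section

open MeasureTheory

/-- The series `f(t) = Σ_p a_p·t^{p−s}·e^{id(p−s)}·e^{u_0·t·e^{id}}`, i.e. the
function `f(z)` on the ray `z = t·e^{id}`, `t > 0`. -/
def laplaceSeries (u0 : ℂ) (d : ℝ) (s : ℂ) (a : ℕ → ℂ) (t : ℝ) : ℂ :=
  ∑' p : ℕ,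
    a p * (t : ℂ) ^ ((p : ℂ) - s) * Complex.exp (Complex.I * (d : ℂ) * ((p : ℂ) - s)) *
      Complex.exp (u0 * (t : ℂ) * Complex.exp ((d : ℂ) * Complex.I))

/-- The integrand `f(z)·e^{−ξz}·(dz/z)` of the analytic Laplace transform in
direction `d`, in the variable `t` with `z = t·e^{id}` (note `dz/z = dt/t`). -/
def laplaceIntegrand (u0 : ℂ) (d : ℝ) (s : ℂ) (a : ℕ → ℂ) (ξ : ℂ) (t : ℝ) : ℂ :=
  laplaceSeries u0 d s a t *
    Complex.exp (-(ξ * (t : ℂ) * Complex.exp ((d : ℂ) * Complex.I))) / (t : ℂ)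

open Set Filter Complex

section Auxiliary

lemma realInt {a b : ℝ} (ha : 0 < a) (hb : 0 < b) :
    IntegrableOn (fun t : ℝ => t ^ (a - 1) * Real.exp (-(b * t))) (Set.Ioi 0) := by
  have := integrableOn_rpow_mul_exp_neg_mul_rpow (by linarith : (-1:ℝ) < a - 1) one_pos hb
  simpa [Real.rpow_one, neg_mul] using this

lemma measAux (z w : ℂ) :
    AEStronglyMeasurable (fun t : ℝ => (t:ℂ) ^ (z - 1) * Complex.exp (-(w * t)))
      (volume.restrict (Set.Ioi 0)) := by
  apply ContinuousOn.aestronglyMeasurable _ measurableSet_Ioi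
  apply ContinuousOn.mul
  · exact (Complex.continuous_ofReal.continuousOn).cpow continuousOn_const
      (fun t ht => Or.inl (by exact_mod_cast ht))
  · exact (Complex.continuous_exp.comp (by fun_prop)).continuousOn

lemma cInt {z β : ℂ} (hz : 0 < z.re) (hβ : 0 < β.re) :
    IntegrableOn (fun t : ℝ => (t:ℂ) ^ (z - 1) * Complex.exp (-(β * t))) (Set.Ioi 0) := by
  refine (realInt hz hβ).integrable.mono' (measAux z β) ?_
  filter_upwards [ae_restrict_mem measurableSet_Ioi] with t ht
  rw [norm_mul, Complex.norm_cpow_eq_rpow_re_of_pos ht, Complex.norm_exp]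
  simp [Complex.sub_re, Complex.one_re, mul_comm]

lemma keyGamma {z : ℂ} (hz : 0 < z.re) {β : ℂ} (hβ : 0 < β.re) :
    ∫ t in Set.Ioi (0:ℝ), (t:ℂ) ^ (z - 1) * Complex.exp (-(β * t)) =
      Complex.Gamma z * β ^ (-z) := by
  set U : Set ℂ := {w | 0 < w.re} with hUdef
  have hUopen : IsOpen U := isOpen_lt continuous_const Complex.continuous_re
  have hUpre : IsPreconnected U := (convex_halfSpace_re_gt (0:ℝ)).isPreconnected
  set F : ℂ → ℂ := fun w => ∫ t in Set.Ioi (0:ℝ), (t:ℂ) ^ (z - 1) * Complex.exp (-(w * t))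
    with hFdef
  set G : ℂ → ℂ := fun w => Complex.Gamma z * w ^ (-z) with hGdef
  have hG : AnalyticOnNhd ℂ G U := by
    apply DifferentiableOn.analyticOnNhd _ hUopen
    intro w hw
    exact ((differentiableAt_const _).mul
      (differentiableAt_id.cpow (differentiableAt_const _) (Or.inl hw))).differentiableWithinAt
  have hF : AnalyticOnNhd ℂ F U := by
    apply DifferentiableOn.analyticOnNhd _ hUopen
    intro w₀ hw₀
    have hw₀' : 0 < w₀.re := hw₀
    set ε := w₀.re / 2 with hεdef
    have hε : 0 < ε := by positivity
    have key := hasDerivAt_integral_of_dominated_loc_of_deriv_le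
      (μ := volume.restrict (Set.Ioi 0)) (x₀ := w₀)
      (F := fun w (t:ℝ) => (t:ℂ) ^ (z-1) * Complex.exp (-(w * t)))
      (F' := fun w (t:ℝ) => (t:ℂ) ^ (z-1) * (Complex.exp (-(w * t)) * (-(t:ℂ))))
      (bound := fun t : ℝ => t ^ z.re * Real.exp (-(ε * t)))
      (Metric.ball_mem_nhds w₀ hε) (Eventually.of_forall fun w => measAux z w) (cInt hz hw₀') ?_ ?_ ?_ ?_
    · exact key.2.differentiableAt.differentiableWithinAt
    · -- F' meas
      apply ContinuousOn.aestronglyMeasurable _ measurableSet_Ioi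
      exact ((Complex.continuous_ofReal.continuousOn).cpow continuousOn_const
        (fun t ht => Or.inl (by exact_mod_cast ht))).mul
        ((by fun_prop : Continuous fun t : ℝ =>
          Complex.exp (-(w₀ * t)) * (-(t:ℂ))).continuousOn)
    · -- bound
      filter_upwards [ae_restrict_mem measurableSet_Ioi] with t ht w hw
      have hwre : ε ≤ w.re := by
        have := Complex.abs_re_le_norm (w - w₀)
        have h2 : ‖w - w₀‖ < ε := by
          simpa [Complex.dist_eq] using Metric.mem_ball.mp hw
        have : |w.re - w₀.re| < ε := lt_of_le_of_lt (by simpa using abs_re_le_norm (w - w₀)) h2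
        have := abs_lt.mp this
        simp only [hεdef] at *; linarith
      rw [norm_mul, norm_mul, Complex.norm_cpow_eq_rpow_re_of_pos ht, Complex.norm_exp]
      have habs : ‖(-(t:ℂ))‖ = t := by
        rw [norm_neg, Complex.norm_of_nonneg ht.le]
      rw [habs]
      have hre2 : (-(w * (t:ℂ))).re = -(w.re * t) := by simp [Complex.mul_re]
      rw [hre2]
      have h1 : (t:ℝ) ^ ((z-1).re) * (Real.exp (-(w.re * t)) * t)
          = t ^ z.re * Real.exp (-(w.re * t)) := by
        rw [Complex.sub_re, Complex.one_re, mul_comm (Real.exp _) t, ← mul_assoc,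
          ← Real.rpow_add_one (ne_of_gt ht), sub_add_cancel]
      rw [h1]
      have h2 : Real.exp (-(w.re * t)) ≤ Real.exp (-(ε * t)) :=
        Real.exp_le_exp.mpr (by nlinarith [(show (0:ℝ) < t from ht).le])
      exact mul_le_mul_of_nonneg_left h2 (Real.rpow_nonneg (show (0:ℝ) < t from ht).le _)
    · exact (realInt (by linarith : (0:ℝ) < z.re + 1) hε).congr_fun
        (fun t ht => by rw [add_sub_cancel_right]) measurableSet_Ioi |>.integrable
    · -- h_diff
      filter_upwards [ae_restrict_mem measurableSet_Ioi] with t ht w hw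
      have h1 : HasDerivAt (fun w : ℂ => -(w * (t:ℂ))) (-(t:ℂ)) w :=
        ((hasDerivAt_id w).mul_const (t:ℂ)).neg.congr_deriv (by simp)
      exact ((h1.cexp).const_mul ((t:ℂ) ^ (z-1)))
  -- equality on reals
  have hreal : ∀ x : ℝ, 0 < x → F ((x:ℂ)) = G ((x:ℂ)) := by
    intro x hx
    have h := Complex.integral_cpow_mul_exp_neg_mul_Ioi hz hx
    simp only [hFdef, hGdef]
    rw [h, mul_comm]
    congr 1
    have harg : Complex.arg (x:ℂ) ≠ Real.pi := by
      rw [Complex.arg_ofReal_of_nonneg hx.le]; exact Ne.symm Real.pi_ne_zero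
    rw [one_div, Complex.inv_cpow _ _ harg, ← Complex.cpow_neg]
  have h1U : (1:ℂ) ∈ U := by simp [hUdef]
  have hβU : β ∈ U := hβ
  have hfreq : ∃ᶠ w in nhdsWithin (1:ℂ) {(1:ℂ)}ᶜ, F w = G w := by
    have htend : Tendsto (fun n : ℕ => ((1 + (n+1:ℝ)⁻¹ : ℝ) : ℂ)) atTop
        (nhdsWithin (1:ℂ) {(1:ℂ)}ᶜ) := by
      apply tendsto_nhdsWithin_of_tendsto_nhds_of_eventually_within
      · have : Tendsto (fun n : ℕ => (1 + (n+1:ℝ)⁻¹ : ℝ)) atTop (nhds 1) := by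
          have := tendsto_one_div_add_atTop_nhds_zero_nat (𝕜 := ℝ)
          simpa [one_div] using (tendsto_const_nhds.add this)
        have := (Complex.continuous_ofReal.tendsto 1).comp this
        simpa [Function.comp_def] using this
      · refine Eventually.of_forall fun n => ?_
        simp only [Set.mem_compl_iff, Set.mem_singleton_iff]
        intro h
        have : (1 + (n+1:ℝ)⁻¹ : ℝ) = 1 := by exact_mod_cast h
        have hpos : (0:ℝ) < (n+1:ℝ)⁻¹ := by positivity
        linarith
    refine htend.frequently (Frequently.of_forall fun n : ℕ => ?_)
    exact hreal (1 + ((n:ℝ)+1)⁻¹) (by positivity)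
  exact hF.eqOn_of_preconnected_of_frequently_eq hG hUpre h1U hfreq hβU

lemma myIntegrableTsum {α : Type*} [MeasurableSpace α] {μ : Measure α} {g : ℕ → α → ℂ}
    (hmeas : ∀ p, AEStronglyMeasurable (g p) μ)
    (hS : ∑' p, ∫⁻ t, ‖g p t‖₊ ∂μ ≠ ⊤) :
    Integrable (fun t => ∑' p, g p t) μ := by
  have h1 : ∫⁻ t, ∑' p, ‖g p t‖ₑ ∂μ ≠ ⊤ := by
    rw [lintegral_tsum (fun p => (hmeas p).aemeasurable.enorm)]; exact hS
  have hae : ∀ᵐ t ∂μ, Summable fun p => ‖g p t‖₊ := by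
    filter_upwards [ae_lt_top' (AEMeasurable.ennreal_tsum fun p => (hmeas p).aemeasurable.enorm) h1]
      with t ht
    exact ENNReal.tsum_coe_ne_top_iff_summable.mp ht.ne
  constructor
  · apply aestronglyMeasurable_of_tendsto_ae (u := atTop)
      (f := fun (n : ℕ) t => ∑ p ∈ Finset.range n, g p t)
      (fun n => Finset.aestronglyMeasurable_fun_sum _ fun p _ => hmeas p)
    filter_upwards [hae] with t ht
    exact (Summable.of_nnnorm ht).hasSum.tendsto_sum_nat
  · rw [HasFiniteIntegral]
    apply lt_of_le_of_lt _ (lt_top_iff_ne_top.mpr h1)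
    apply lintegral_mono_ae
    filter_upwards [hae] with t ht
    calc (‖∑' p, g p t‖₊ : ENNReal) ≤ ((∑' p, ‖g p t‖₊ : NNReal) : ENNReal) :=
        ENNReal.coe_le_coe.mpr (nnnorm_tsum_le ht)
      _ = ∑' p, ‖g p t‖ₑ := ENNReal.coe_tsum ht

lemma gammaLower {s : ℂ} (hs : s.re < 0) (p : ℕ) :
    Real.Gamma ((p : ℝ) - s.re) ≤
      (Real.Gamma (-s.re) / ‖Complex.Gamma (-s)‖) *
        ‖Complex.Gamma ((p : ℂ) - s)‖ := by
  have hΓne : ‖Complex.Gamma (-s)‖ ≠ 0 := by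
    simpa using Complex.Gamma_ne_zero_of_re_pos (by simpa using neg_pos.mpr hs)
  have hq : ∀ q : ℕ, (0:ℝ) < (q : ℝ) - s.re := fun q => by
    have : (0:ℝ) ≤ (q:ℝ) := Nat.cast_nonneg q
    linarith
  induction p with
  | zero =>
    simp only [Nat.cast_zero, zero_sub]
    rw [div_mul_cancel₀ _ hΓne]
  | succ p ih =>
    have hre : (0:ℝ) < (p : ℝ) - s.re := hq p
    have hC : ((p : ℂ) - s) ≠ 0 := by
      intro h
      have := congrArg Complex.re h
      simp [Complex.sub_re] at this
      linarith
    have h1 : ((p + 1 : ℕ) : ℂ) - s = ((p : ℂ) - s) + 1 := by push_cast; ring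
    have h2 : ((p + 1 : ℕ) : ℝ) - s.re = ((p : ℝ) - s.re) + 1 := by push_cast; ring
    rw [h1, h2, Complex.Gamma_add_one _ hC, Real.Gamma_add_one hre.ne', norm_mul]
    have hle : (p : ℝ) - s.re ≤ ‖(p : ℂ) - s‖ := by
      have := Complex.re_le_norm ((p : ℂ) - s)
      simpa [Complex.sub_re] using this
    calc ((p : ℝ) - s.re) * Real.Gamma ((p : ℝ) - s.re)
        ≤ ((p : ℝ) - s.re) * ((Real.Gamma (-s.re) / ‖Complex.Gamma (-s)‖) *
          ‖Complex.Gamma ((p : ℂ) - s)‖) :=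
          mul_le_mul_of_nonneg_left ih hre.le
      _ ≤ ‖(p : ℂ) - s‖ * ((Real.Gamma (-s.re) / ‖Complex.Gamma (-s)‖) *
          ‖Complex.Gamma ((p : ℂ) - s)‖) := by
          exact mul_le_mul_of_nonneg_right hle (mul_nonneg (div_nonneg
            (Real.Gamma_pos_of_pos (neg_pos.mpr hs)).le (norm_nonneg _))
            (norm_nonneg _))
      _ = (Real.Gamma (-s.re) / ‖Complex.Gamma (-s)‖) *
          (‖(p : ℂ) - s‖ * ‖Complex.Gamma ((p : ℂ) - s)‖) := by ring

lemma ratioSummable {σ : ℝ} (hσ : σ < 0) {x : ℝ} (hx : 0 < x) :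
    Summable (fun p : ℕ => x ^ p / Real.Gamma ((p : ℝ) - σ)) := by
  have hq : ∀ q : ℕ, (0:ℝ) < (q : ℝ) - σ := fun q => by
    have : (0:ℝ) ≤ (q:ℝ) := Nat.cast_nonneg q
    linarith
  have hpos : ∀ p : ℕ, 0 < x ^ p / Real.Gamma ((p : ℝ) - σ) := fun p =>
    div_pos (pow_pos hx p) (Real.Gamma_pos_of_pos (hq p))
  apply summable_of_ratio_test_tendsto_lt_one (l := 0) one_pos
    (Eventually.of_forall fun p => (hpos p).ne')
  have heq : ∀ p : ℕ, ‖x ^ (p+1) / Real.Gamma (((p+1 : ℕ) : ℝ) - σ)‖ /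
      ‖x ^ p / Real.Gamma ((p : ℝ) - σ)‖ = x / ((p : ℝ) - σ) := by
    intro p
    have hg : (0:ℝ) < Real.Gamma ((p : ℝ) - σ) := Real.Gamma_pos_of_pos (hq p)
    have h2 : ((p + 1 : ℕ) : ℝ) - σ = ((p : ℝ) - σ) + 1 := by push_cast; ring
    rw [h2, Real.Gamma_add_one (hq p).ne']
    rw [Real.norm_of_nonneg (hpos p).le, Real.norm_of_nonneg
      (le_of_lt (div_pos (pow_pos hx _) (mul_pos (hq p) hg)))]
    rw [pow_succ]
    rw [div_div_div_comm, mul_div_cancel_left₀ _ (pow_ne_zero p hx.ne'),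
      mul_div_cancel_right₀ _ hg.ne']
  refine Tendsto.congr (fun p => (heq p).symm) ?_
  have h3 : Tendsto (fun p : ℕ => ((p : ℝ) - σ)) atTop atTop :=
    tendsto_atTop_add_const_right _ (-σ) tendsto_natCast_atTop_atTop |>.congr (fun p => by ring)
  simpa using Tendsto.div_atTop (tendsto_const_nhds (x := x)) h3

end Auxiliary

/-- **Lemma 2.10.** If `Re s < 0` and the series
`Σ_p a_p·Γ(p−s)·w^p` has radius of convergence `≥ r`, then for every `ξ` with
`Re((ξ−u_0)e^{id}) > 1/r` the series defining `f` converges for all `t > 0`,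
the analytic Laplace transform converges absolutely, and its value equals the
formal Laplace transform `Σ_p a_p·Γ(p−s)·(ξ−u_0)^{s−p}` with the arguments
chosen so that `θ + d ∈ (−π/2, π/2)`. -/
theorem analytic_laplace_eq_formal_laplace
    (u0 : ℂ) (d : ℝ) (s : ℂ) (hs : s.re < 0) (a : ℕ → ℂ) (r : ℝ) (hr : 0 < r)
    (hconv : ∀ w : ℂ, ‖w‖ < r →
      Summable fun p : ℕ => a p * Complex.Gamma ((p : ℂ) - s) * w ^ p)
    (ξ : ℂ)
    (hξ : 1 / r < ((ξ - u0) * Complex.exp ((d : ℂ) * Complex.I)).re) :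
    (∀ t : ℝ, 0 < t →
      Summable fun p : ℕ =>
        a p * (t : ℂ) ^ ((p : ℂ) - s) * Complex.exp (Complex.I * (d : ℂ) * ((p : ℂ) - s)) *
          Complex.exp (u0 * (t : ℂ) * Complex.exp ((d : ℂ) * Complex.I))) ∧
    IntegrableOn (laplaceIntegrand u0 d s a ξ) (Set.Ioi (0 : ℝ)) ∧
    ∀ θ : ℝ,
      ξ - u0 = (‖ξ - u0‖ : ℂ) * Complex.exp ((θ : ℂ) * Complex.I) →
      θ + d ∈ Set.Ioo (-(Real.pi / 2)) (Real.pi / 2) →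
      ∫ t in Set.Ioi (0 : ℝ), laplaceIntegrand u0 d s a ξ t
        = ∑' p : ℕ,
            a p * Complex.Gamma ((p : ℂ) - s) *
              Complex.exp ((s - (p : ℂ)) *
                (((Real.log ‖ξ - u0‖ : ℝ) : ℂ) + (θ : ℂ) * Complex.I)) := by
  have hr' : 0 < 1 / r := by positivity
  set β : ℂ := (ξ - u0) * Complex.exp ((d:ℂ) * Complex.I) with hβdef
  have hb0 : 0 < β.re := lt_trans hr' hξ
  have hq : ∀ q : ℕ, (0:ℝ) < (q : ℝ) - s.re := fun q => by
    have : (0:ℝ) ≤ (q:ℝ) := Nat.cast_nonneg q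
    linarith
  have hbρ : 1 / β.re < r := by
    rw [div_lt_iff₀ hb0]
    rw [div_lt_iff₀ hr] at hξ
    nlinarith
  set ρ : ℝ := (1 / β.re + r) / 2 with hρdef
  have hρ1 : 1 / β.re < ρ := by rw [hρdef]; linarith
  have hρ2 : ρ < r := by rw [hρdef]; linarith
  have hρ0 : 0 < ρ := lt_trans (by positivity) hρ1
  -- bounded coefficients
  obtain ⟨C, hC0, hC⟩ : ∃ C, 0 ≤ C ∧ ∀ p : ℕ,
      ‖a p‖ * ‖Complex.Gamma ((p:ℂ) - s)‖ * ρ ^ p ≤ C := by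
    have hsum := hconv (ρ:ℂ) (by rwa [Complex.norm_of_nonneg hρ0.le])
    have h1 : Tendsto (fun p : ℕ =>
        ‖a p‖ * ‖Complex.Gamma ((p:ℂ) - s)‖ * ρ ^ p) atTop (nhds 0) := by
      have := hsum.tendsto_atTop_zero.norm
      simp only [norm_zero] at this
      refine this.congr fun p => ?_
      rw [norm_mul, norm_mul, norm_pow, Complex.norm_of_nonneg hρ0.le]
    obtain ⟨C, hC⟩ := h1.bddAbove_range
    exact ⟨max C 0, le_max_right _ _, fun p => le_trans (hC ⟨p, rfl⟩) (le_max_left _ _)⟩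
  set c : ℝ := Real.Gamma (-s.re) / ‖Complex.Gamma (-s)‖ with hcdef
  have hc0 : 0 ≤ c := div_nonneg (Real.Gamma_pos_of_pos (neg_pos.mpr hs)).le
    (norm_nonneg _)
  have hcoef : ∀ p : ℕ, ‖a p‖ * Real.Gamma ((p:ℝ) - s.re) * ρ ^ p ≤ C * c := by
    intro p
    calc ‖a p‖ * Real.Gamma ((p:ℝ) - s.re) * ρ ^ p
        ≤ ‖a p‖ * (c * ‖Complex.Gamma ((p:ℂ) - s)‖) * ρ ^ p := by
          apply mul_le_mul_of_nonneg_right _ (pow_nonneg hρ0.le p)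
          exact mul_le_mul_of_nonneg_left (gammaLower hs p) (norm_nonneg _)
      _ = c * (‖a p‖ * ‖Complex.Gamma ((p:ℂ) - s)‖ * ρ ^ p) := by ring
      _ ≤ c * C := mul_le_mul_of_nonneg_left (hC p) hc0
      _ = C * c := mul_comm _ _
  set K1 : ℝ := Real.exp (d * s.im) with hK1def
  have hK10 : 0 < K1 := Real.exp_pos _
  have hE1 : ∀ p : ℕ,
      ‖Complex.exp (Complex.I * (d:ℂ) * ((p:ℂ) - s))‖ = K1 := fun p => by
    rw [Complex.norm_exp, hK1def]
    congr 1
    simp [Complex.mul_re, Complex.mul_im, Complex.sub_re, Complex.sub_im]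
  -- Part (i)
  have hsummable : ∀ t : ℝ, 0 < t →
      Summable fun p : ℕ =>
        a p * (t : ℂ) ^ ((p : ℂ) - s) * Complex.exp (Complex.I * (d : ℂ) * ((p : ℂ) - s)) *
          Complex.exp (u0 * (t : ℂ) * Complex.exp ((d : ℂ) * Complex.I)) := by
    intro t ht
    set K2 : ℝ := Real.exp ((u0 * (t:ℂ) * Complex.exp ((d:ℂ) * Complex.I)).re) with hK2def
    have hK20 : 0 < K2 := Real.exp_pos _
    apply Summable.of_norm
    have hnorm : ∀ p : ℕ,
        ‖a p * (t : ℂ) ^ ((p : ℂ) - s) * Complex.exp (Complex.I * (d : ℂ) * ((p : ℂ) - s)) *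
          Complex.exp (u0 * (t : ℂ) * Complex.exp ((d : ℂ) * Complex.I))‖
        = ‖a p‖ * t ^ ((p:ℝ) - s.re) * K1 * K2 := by
      intro p
      rw [norm_mul, norm_mul, norm_mul, Complex.norm_cpow_eq_rpow_re_of_pos ht,
        hE1 p, Complex.norm_exp, ← hK2def, Complex.sub_re, Complex.natCast_re]
    have hbsum : Summable (fun p : ℕ => (C * c * t ^ (-s.re) * K1 * K2) *
        ((t/ρ) ^ p / Real.Gamma ((p:ℝ) - s.re))) :=
      (ratioSummable hs (div_pos ht hρ0)).mul_left _
    apply Summable.of_nonneg_of_le (fun p => norm_nonneg _) _ hbsum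
    intro p
    rw [hnorm p]
    have hgp : 0 < Real.Gamma ((p:ℝ) - s.re) := Real.Gamma_pos_of_pos (hq p)
    have h2 : t ^ ((p:ℝ) - s.re) = t ^ p * t ^ (-s.re) := by
      rw [sub_eq_add_neg, Real.rpow_add ht, Real.rpow_natCast]
    have ht1 : t ^ p = (t/ρ) ^ p * ρ ^ p := by
      rw [div_pow, div_mul_cancel₀]
      exact pow_ne_zero _ hρ0.ne'
    have hstep : ‖a p‖ * ρ ^ p ≤ (C * c) / Real.Gamma ((p:ℝ) - s.re) := by
      rw [le_div_iff₀ hgp]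
      calc ‖a p‖ * ρ ^ p * Real.Gamma ((p:ℝ) - s.re)
          = ‖a p‖ * Real.Gamma ((p:ℝ) - s.re) * ρ ^ p := by ring
        _ ≤ C * c := hcoef p
    rw [h2]
    calc ‖a p‖ * (t ^ p * t ^ (-s.re)) * K1 * K2
        = ((t/ρ) ^ p * (‖a p‖ * ρ ^ p)) * (t ^ (-s.re) * K1 * K2) := by
          rw [ht1]; ring
      _ ≤ ((t/ρ) ^ p * ((C * c) / Real.Gamma ((p:ℝ) - s.re))) * (t ^ (-s.re) * K1 * K2) := by
          apply mul_le_mul_of_nonneg_right _ (by positivity)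
          exact mul_le_mul_of_nonneg_left hstep (pow_nonneg (div_nonneg ht.le hρ0.le) p)
      _ = (C * c * t ^ (-s.re) * K1 * K2) * ((t/ρ) ^ p / Real.Gamma ((p:ℝ) - s.re)) := by
          ring
  -- the term functions for the integral
  set g : ℕ → ℝ → ℂ := fun p t =>
    (a p * Complex.exp (Complex.I * (d:ℂ) * ((p:ℂ) - s))) *
      ((t:ℂ) ^ (((p:ℂ) - s) - 1) * Complex.exp (-(β * (t:ℂ)))) with hgdef
  have hz : ∀ p : ℕ, 0 < ((p:ℂ) - s).re := fun p => by
    rw [Complex.sub_re]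
    simpa using hq p
  have hgInt : ∀ p, Integrable (g p) (volume.restrict (Set.Ioi 0)) := fun p =>
    ((cInt (hz p) hb0).const_mul _)
  have hgnorm : ∀ p : ℕ, ∀ t ∈ Set.Ioi (0:ℝ), ‖g p t‖ =
      (‖a p‖ * K1) * (t ^ (((p:ℝ) - s.re) - 1) * Real.exp (-(β.re * t))) := by
    intro p t ht
    have ht' : (0:ℝ) < t := ht
    rw [hgdef]
    simp only
    rw [norm_mul, norm_mul, norm_mul, hE1 p,
      Complex.norm_cpow_eq_rpow_re_of_pos ht', Complex.norm_exp]
    have hre : ((((p:ℂ) - s) - 1)).re = ((p:ℝ) - s.re) - 1 := by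
      simp [Complex.sub_re]
    have hre2 : (-(β * (t:ℂ))).re = -(β.re * t) := by simp [Complex.mul_re]
    rw [hre, hre2]
  have hgval : ∀ p : ℕ, ∫ t in Set.Ioi (0:ℝ), ‖g p t‖ =
      (‖a p‖ * K1) * ((1/β.re) ^ ((p:ℝ) - s.re) * Real.Gamma ((p:ℝ) - s.re)) := by
    intro p
    rw [setIntegral_congr_fun measurableSet_Ioi (hgnorm p), integral_const_mul,
      Real.integral_rpow_mul_exp_neg_mul_Ioi (hq p) hb0]
  set M : ℕ → ℝ := fun p => (C * c * K1 * (1/β.re) ^ (-s.re)) * (1/(β.re * ρ)) ^ p with hMdef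
  have hMle : ∀ p, ∫ t in Set.Ioi (0:ℝ), ‖g p t‖ ≤ M p := by
    intro p
    rw [hgval p, hMdef]
    have hb' : (0:ℝ) < 1 / β.re := by positivity
    have h2 : (1/β.re) ^ ((p:ℝ) - s.re) = (1/β.re) ^ p * (1/β.re) ^ (-s.re) := by
      rw [sub_eq_add_neg, Real.rpow_add hb', Real.rpow_natCast]
    rw [h2]
    have hgp : 0 < Real.Gamma ((p:ℝ) - s.re) := Real.Gamma_pos_of_pos (hq p)
    have hkey : ‖a p‖ * K1 * ((1/β.re) ^ p * (1/β.re) ^ (-s.re) *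
        Real.Gamma ((p:ℝ) - s.re))
        = (‖a p‖ * Real.Gamma ((p:ℝ) - s.re) * ρ ^ p) *
          ((1/(β.re * ρ)) ^ p) * (K1 * (1/β.re) ^ (-s.re)) := by
      have hb1 : β.re ≠ 0 := hb0.ne'
      have hρ1' : ρ ≠ 0 := hρ0.ne'
      have hpp : (1/(β.re * ρ) : ℝ) ^ p = (1/β.re) ^ p * (1/ρ) ^ p := by
        rw [← mul_pow]; congr 1; field_simp
      rw [hpp]
      have hcancel : (ρ:ℝ) ^ p * (1/ρ) ^ p = 1 := by
        rw [← mul_pow]; simp [hρ1']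
      calc ‖a p‖ * K1 * ((1/β.re) ^ p * (1/β.re) ^ (-s.re) *
            Real.Gamma ((p:ℝ) - s.re))
          = ‖a p‖ * Real.Gamma ((p:ℝ) - s.re) * ((ρ:ℝ) ^ p * (1/ρ) ^ p) *
            (1/β.re) ^ p * (K1 * (1/β.re) ^ (-s.re)) := by rw [hcancel]; ring
        _ = ‖a p‖ * Real.Gamma ((p:ℝ) - s.re) * ρ ^ p *
            ((1/β.re) ^ p * (1/ρ) ^ p) * (K1 * (1/β.re) ^ (-s.re)) := by ring
    rw [hkey]
    calc (‖a p‖ * Real.Gamma ((p:ℝ) - s.re) * ρ ^ p) *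
          ((1/(β.re * ρ)) ^ p) * (K1 * (1/β.re) ^ (-s.re))
        ≤ (C * c) * ((1/(β.re * ρ)) ^ p) * (K1 * (1/β.re) ^ (-s.re)) := by
          apply mul_le_mul_of_nonneg_right (mul_le_mul_of_nonneg_right (hcoef p) _) _
          · positivity
          · positivity
      _ = (C * c * K1 * (1/β.re) ^ (-s.re)) * (1/(β.re * ρ)) ^ p := by ring
  have hMsum : Summable M := by
    apply Summable.mul_left
    apply summable_geometric_of_lt_one (by positivity)
    rw [div_lt_one (by positivity)]
    have : 1 / β.re * β.re = 1 := by field_simp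
    nlinarith
  have hM0 : ∀ p, 0 ≤ M p := by
    intro p
    rw [hMdef]
    positivity
  have hS : ∑' p, ∫⁻ t in Set.Ioi (0:ℝ), ‖g p t‖ₑ ≠ ⊤ := by
    have h1 : ∀ p, ∫⁻ t in Set.Ioi (0:ℝ), ‖g p t‖ₑ =
        ENNReal.ofReal (∫ t in Set.Ioi (0:ℝ), ‖g p t‖) :=
      fun p => (ofReal_integral_norm_eq_lintegral_enorm (hgInt p)).symm
    have h2 : ∑' p, ∫⁻ t in Set.Ioi (0:ℝ), ‖g p t‖ₑ ≤
        ENNReal.ofReal (∑' p, M p) := by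
      calc ∑' p, ∫⁻ t in Set.Ioi (0:ℝ), ‖g p t‖ₑ
          = ∑' p, ENNReal.ofReal (∫ t in Set.Ioi (0:ℝ), ‖g p t‖) := tsum_congr h1
        _ ≤ ∑' p, ENNReal.ofReal (M p) :=
            ENNReal.tsum_le_tsum fun p => ENNReal.ofReal_le_ofReal (hMle p)
        _ = ENNReal.ofReal (∑' p, M p) := (ENNReal.ofReal_tsum_of_nonneg hM0 hMsum).symm
    exact ne_top_of_le_ne_top ENNReal.ofReal_ne_top h2
  -- pointwise identity
  have hpt : ∀ t ∈ Set.Ioi (0:ℝ), laplaceIntegrand u0 d s a ξ t = ∑' p, g p t := by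
    intro t ht
    have ht' : (0:ℝ) < t := ht
    rw [laplaceIntegrand, laplaceSeries, ← tsum_mul_right, ← tsum_div_const]
    apply tsum_congr
    intro p
    have hexp : Complex.exp (u0 * (t:ℂ) * Complex.exp ((d:ℂ) * Complex.I)) *
        Complex.exp (-(ξ * (t:ℂ) * Complex.exp ((d:ℂ) * Complex.I))) =
        Complex.exp (-(β * (t:ℂ))) := by
      rw [← Complex.exp_add]
      congr 1
      rw [hβdef]
      ring
    have hcp : (t:ℂ) ^ (((p:ℂ) - s) - 1) = (t:ℂ) ^ ((p:ℂ) - s) / (t:ℂ) := by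
      rw [Complex.cpow_sub _ _ (Complex.ofReal_ne_zero.mpr ht'.ne'), Complex.cpow_one]
    rw [hgdef]
    simp only
    rw [hcp, ← hexp]
    ring
  have hIntOn : IntegrableOn (laplaceIntegrand u0 d s a ξ) (Set.Ioi (0:ℝ)) := by
    apply (myIntegrableTsum (fun p => (hgInt p).aestronglyMeasurable) hS).congr
    filter_upwards [ae_restrict_mem measurableSet_Ioi] with t ht
    exact (hpt t ht).symm
  refine ⟨hsummable, hIntOn, ?_⟩
  -- Part (iii)
  intro θ hθ hθd
  have hβne : β ≠ 0 := fun h => by rw [h] at hb0; simp at hb0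
  have hμ0 : (0:ℝ) < ‖ξ - u0‖ := by
    rcases eq_or_ne (ξ - u0) 0 with h | h
    · exfalso
      rw [hβdef, h, zero_mul] at hb0
      simp at hb0
    · exact norm_pos_iff.mpr h
  have habsβ : ‖β‖ = ‖ξ - u0‖ := by
    rw [hβdef, norm_mul, Complex.norm_exp]
    simp [Complex.mul_re]
  have hargβ : Complex.arg β = θ + d := by
    have hβeq : β = ((‖ξ - u0‖ : ℝ) : ℂ) *
        Complex.exp (((θ + d : ℝ) : ℂ) * Complex.I) := by
      have h2 : ((‖ξ - u0‖ : ℝ) : ℂ) * Complex.exp (((θ + d : ℝ) : ℂ) * Complex.I)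
          = (((‖ξ - u0‖ : ℝ) : ℂ) * Complex.exp ((θ:ℂ) * Complex.I)) *
            Complex.exp ((d:ℂ) * Complex.I) := by
        rw [mul_assoc, ← Complex.exp_add]
        congr 2
        push_cast
        ring
      rw [h2, ← hθ, hβdef]
    rw [hβeq, Complex.exp_mul_I]
    refine Complex.arg_mul_cos_add_sin_mul_I hμ0 ⟨?_, ?_⟩
    · have := hθd.1
      have hπ := Real.pi_pos
      linarith
    · have := hθd.2
      have hπ := Real.pi_pos
      linarith
  have hlogβ : Complex.log β = ((Real.log (‖ξ - u0‖) : ℝ) : ℂ) +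
      ((θ + d : ℝ) : ℂ) * Complex.I := by
    apply Complex.ext
    · simp [Complex.log_re, habsβ]
    · simp [Complex.log_im, hargβ]
  rw [setIntegral_congr_fun measurableSet_Ioi hpt,
    integral_tsum (fun p => (hgInt p).aestronglyMeasurable) hS]
  apply tsum_congr
  intro p
  rw [hgdef]
  simp only
  rw [integral_const_mul, keyGamma (hz p) hb0, Complex.cpow_def_of_ne_zero hβne, hlogβ]
  rw [show a p * Complex.exp (Complex.I * (d:ℂ) * ((p:ℂ) - s)) *
      (Complex.Gamma ((p:ℂ) - s) * Complex.exp ((((Real.log (‖ξ - u0‖) : ℝ) : ℂ) +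
        ((θ + d : ℝ) : ℂ) * Complex.I) * -((p:ℂ) - s)))
      = a p * Complex.Gamma ((p:ℂ) - s) *
        (Complex.exp (Complex.I * (d:ℂ) * ((p:ℂ) - s)) *
          Complex.exp ((((Real.log (‖ξ - u0‖) : ℝ) : ℂ) +
            ((θ + d : ℝ) : ℂ) * Complex.I) * -((p:ℂ) - s)))
      from by ring, ← Complex.exp_add]
  congr 1
  congr 1
  push_cast
  ring
end
end

section
/- Darboux's method along a segment (first part of the Darboux lemma, Lemma \ref{Lem:AnaLim}): let α ≥ 1 be a real number, β, C ∈ ℂ, and let v_s ≠ v_t be complex numbers; let θ ∈ ℝ be such that v_t − v_s = |v_t − v_s|·e^{iθ}, and for z ∈ ℂ write (v_t−v_s)^z := exp(z·(log|v_t−v_s| + iθ)). Let (c_p)_{p≥0} be complex numbers such that p^{1−α}·(v_t−v_s)^{p−β}·c_p → C·(v_t−v_s)^{−α} as p → ∞. Then for every x ∈ (0,1) the series f(x) := Σ_{p≥0} c_p·x^{p−β}·(v_t−v_s)^{p−β} converges absolutely (f(x) is the value of the series Σ_p c_p·(v_t−ξ)^{p−β} at the point ξ = v_t − x·(v_t−v_s)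 of the open segment (v_s, v_t), with the argument of v_t−ξ taken equal to θ), and (1−x)^α·(v_t−v_s)^α·f(x) → C·Γ(α) as x → 1⁻; equivalently, Σ_p c_p·(v_t−ξ)^{p−β} = C·Γ(α)·(ξ−v_s)^{−α} + o(|ξ−v_s|^{−α}) as ξ → v_s along the segment, with the argument of ξ−v_s taken equal to θ. -/
noncomputable section
open Filter Set MeasureTheory
open scoped Topology

namespace Darboux

variable (α : ℝ)

def dseq (p : ℕ) : ℝ := Real.Gamma (p + α) / p.factorial

lemma dseq_pos (hα : 0 < α) (p : ℕ) : 0 < dseq α p :=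
  div_pos (Real.Gamma_pos_of_pos (by positivity)) (by positivity)

lemma dseq_succ (hα : 0 < α) (p : ℕ) :
    dseq α (p + 1) = ((p : ℝ) + α) / (p + 1) * dseq α p := by
  have h1 : ((p : ℕ) + 1 : ℕ) + α = ((p : ℝ) + α) + 1 := by push_cast; ring
  have h2 : Real.Gamma (((p : ℝ) + α) + 1) = ((p : ℝ) + α) * Real.Gamma (p + α) :=
    Real.Gamma_add_one (by positivity)
  simp only [dseq, h1, h2, Nat.factorial_succ]
  push_cast
  field_simp

lemma summable_dseq_mul_pow {x : ℝ} (hα : 0 < α) (hx0 : 0 ≤ x) (hx1 : x < 1) :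
    Summable (fun p : ℕ => dseq α p * x ^ p) := by
  set r : ℝ := (1 + x) / 2 with hr
  have hr1 : r < 1 := by rw [hr]; linarith
  have hxr : x < r := by rw [hr]; linarith
  have htend : Tendsto (fun p : ℕ => x * (((p : ℝ) + α) / (p + 1))) atTop (𝓝 x) := by
    have : Tendsto (fun p : ℕ => ((p : ℝ) + α) / (p + 1)) atTop (𝓝 1) := by
      have h : Tendsto (fun p : ℕ => (α - 1) / ((p:ℝ)+1)) atTop (𝓝 0) :=
        Filter.Tendsto.div_atTop tendsto_const_nhds
          (tendsto_natCast_atTop_atTop.atTop_add tendsto_const_nhds)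
      have heq : (fun p : ℕ => ((p : ℝ) + α) / (p + 1)) =
          fun p : ℕ => (α - 1) / ((p:ℝ)+1) + 1 := by
        funext p
        have : ((p:ℝ) + 1) ≠ 0 := by positivity
        field_simp
        ring
      rw [heq]
      simpa using h.add tendsto_const_nhds
    simpa using (tendsto_const_nhds (x := x)).mul this
  have hev : ∀ᶠ p : ℕ in atTop, x * (((p : ℝ) + α) / (p + 1)) ≤ r :=
    htend.eventually_le_const hxr
  apply summable_of_ratio_norm_eventually_le hr1
  filter_upwards [hev] with p hp
  have hd0 : 0 ≤ dseq α p := (dseq_pos α hα p).le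
  have hratio : dseq α (p + 1) * x ^ (p + 1) = (x * (((p : ℝ) + α) / (p + 1))) * (dseq α p * x ^ p) := by
    rw [dseq_succ α hα p, pow_succ]
    ring
  rw [Real.norm_eq_abs, Real.norm_eq_abs, hratio, abs_mul,
    abs_of_nonneg (by positivity : (0:ℝ) ≤ x * (((p : ℝ) + α) / (p + 1)))]
  exact mul_le_mul_of_nonneg_right hp (abs_nonneg _)


lemma exp_tsum (y : ℝ) : ∑' p : ℕ, y ^ p / p.factorial = Real.exp y := by
  rw [Real.exp_eq_exp_ℝ, NormedSpace.exp_eq_tsum_div]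

lemma tsum_dseq_mul_pow (hα : 0 < α) {x : ℝ} (hx0 : 0 < x) (hx1 : x < 1) :
    ∑' p : ℕ, dseq α p * x ^ p = Real.Gamma α * (1 - x) ^ (-α : ℝ) := by
  have h1x : 0 < 1 - x := by linarith
  set F : ℕ → ℝ → ℝ := fun p t => x ^ p / p.factorial * (Real.exp (-t) * t ^ ((p : ℝ) + α - 1))
    with hF
  have hpα : ∀ p : ℕ, 0 < (p : ℝ) + α := fun p => by positivity
  have hF_int : ∀ p : ℕ, Integrable (F p) (volume.restrict (Ioi 0)) := fun p =>
    ((Real.GammaIntegral_convergent (hpα p))).const_mul _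
  have hF_val : ∀ p : ℕ, ∫ t in Ioi 0, F p t = dseq α p * x ^ p := by
    intro p
    rw [hF]
    simp only
    rw [MeasureTheory.integral_const_mul _ _, ← Real.Gamma_eq_integral (hpα p), dseq]
    ring
  have hF_norm : ∀ p : ℕ, ∫ t in Ioi 0, ‖F p t‖ = dseq α p * x ^ p := by
    intro p
    rw [← hF_val p]
    refine setIntegral_congr_fun measurableSet_Ioi fun t ht => ?_
    have ht' : (0:ℝ) < t := ht
    rw [Real.norm_of_nonneg (by positivity)]
  have hF_sum : Summable fun p : ℕ => ∫ t in Ioi 0, ‖F p t‖ := by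
    simpa only [hF_norm] using summable_dseq_mul_pow α hα hx0.le hx1
  have key := MeasureTheory.integral_tsum_of_summable_integral_norm hF_int hF_sum
  have hpt : ∀ t ∈ Ioi (0:ℝ), (∑' p : ℕ, F p t)
      = t ^ (α - 1) * Real.exp (-((1 - x) * t)) := by
    intro t ht
    have ht' : (0:ℝ) < t := ht
    have hterm : ∀ p : ℕ, F p t
        = (Real.exp (-t) * t ^ (α - 1)) * ((x * t) ^ p / p.factorial) := by
      intro p
      rw [hF]
      simp only
      have : (p : ℝ) + α - 1 = (p : ℝ) + (α - 1) := by ring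
      rw [this, Real.rpow_add ht', Real.rpow_natCast, mul_pow]
      field_simp
    rw [tsum_congr hterm, tsum_mul_left, exp_tsum,
      mul_comm (Real.exp (-t)) (t ^ (α - 1)), mul_assoc, ← Real.exp_add]
    congr 1
    ring
  have hrhs : ∫ t in Ioi 0, (∑' p : ℕ, F p t)
      = Real.Gamma α * (1 - x) ^ (-α : ℝ) := by
    rw [setIntegral_congr_fun measurableSet_Ioi hpt,
      Real.integral_rpow_mul_exp_neg_mul_Ioi hα h1x]
    rw [one_div, Real.inv_rpow h1x.le, ← Real.rpow_neg h1x.le, mul_comm]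
  rw [← funext hF_val, key, hrhs]


lemma gamma_prod (hα : 0 < α) (n : ℕ) :
    Real.Gamma α * ∏ j ∈ Finset.range (n + 1), (α + j) = Real.Gamma (α + n + 1) := by
  induction n with
  | zero =>
    simp only [Nat.cast_zero, add_zero, zero_add, Finset.prod_range_one]
    rw [Real.Gamma_add_one hα.ne']
    ring
  | succ n ih =>
    rw [Finset.prod_range_succ, ← mul_assoc, ih]
    have : α + (n + 1 : ℕ) + 1 = (α + n + 1) + 1 := by push_cast; ring
    rw [this, Real.Gamma_add_one (by positivity : α + (n:ℝ) + 1 ≠ 0)]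
    push_cast
    ring

lemma aux_div_tendsto (hα : 0 < α) :
    Tendsto (fun n : ℕ => (α + (n:ℝ)) / n) atTop (𝓝 1) := by
  have h0 : Tendsto (fun n : ℕ => α / (n:ℝ)) atTop (𝓝 0) :=
    Filter.Tendsto.div_atTop tendsto_const_nhds tendsto_natCast_atTop_atTop
  have h : Tendsto (fun n : ℕ => α / (n:ℝ) + 1) atTop (𝓝 (0 + 1)) :=
    h0.add tendsto_const_nhds
  rw [zero_add] at h
  apply h.congr'
  filter_upwards [eventually_ge_atTop 1] with n hn
  have hn' : (0:ℝ) < n := by exact_mod_cast hn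
  field_simp

lemma gammaRatio (hα : 0 < α) :
    Tendsto (fun n : ℕ => (n:ℝ) ^ (α - 1) * n.factorial / Real.Gamma (n + α))
      atTop (𝓝 1) := by
  have hG : Real.Gamma α ≠ 0 := (Real.Gamma_pos_of_pos hα).ne'
  have hu : Tendsto (fun n : ℕ => (n:ℝ) ^ α * n.factorial / Real.Gamma (α + n + 1))
      atTop (𝓝 1) := by
    have h : Tendsto (fun n => Real.GammaSeq α n / Real.Gamma α) atTop
        (𝓝 (Real.Gamma α / Real.Gamma α)) := (Real.GammaSeq_tendsto_Gamma α).div_const _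
    rw [div_self hG] at h
    apply h.congr
    intro n
    rw [Real.GammaSeq, ← gamma_prod α hα n, div_div]
    ring
  have hmain := hu.mul (aux_div_tendsto α hα)
  rw [mul_one] at hmain
  apply hmain.congr'
  filter_upwards [eventually_ge_atTop 1] with n hn
  have hn' : (0:ℝ) < n := by exact_mod_cast hn
  have hGp : 0 < Real.Gamma (α + n) := Real.Gamma_pos_of_pos (by positivity)
  have h1 : Real.Gamma (α + n + 1) = (α + n) * Real.Gamma (α + n) :=
    Real.Gamma_add_one (by positivity)
  have h2 : (n:ℝ) ^ α = (n:ℝ) ^ (α - 1) * n := by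
    conv_lhs => rw [show α = (α - 1) + 1 by ring]
    rw [Real.rpow_add hn', Real.rpow_one]
  have h3 : ((n:ℝ) + α) = (α + n) := by ring
  rw [h1, h2, add_comm (n:ℝ) α]
  field_simp


lemma norm_pow_term (x : ℝ) (hx : 0 ≤ x) (z : ℂ) (p : ℕ) :
    ‖z * (x:ℂ) ^ p‖ = ‖z‖ * x ^ p := by
  rw [norm_mul, norm_pow, Complex.norm_real, Real.norm_of_nonneg hx]

set_option maxHeartbeats 1000000 in
lemma abelian (hα : 1 ≤ α) (a : ℕ → ℂ) (D : ℂ)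
    (h : Tendsto (fun p : ℕ => a p / ((dseq α p : ℝ) : ℂ)) atTop (𝓝 D)) :
    (∀ x : ℝ, x ∈ Ioo (0:ℝ) 1 → Summable fun p : ℕ => a p * (x:ℂ) ^ p) ∧
    Tendsto (fun x : ℝ => (((1 - x) ^ α : ℝ) : ℂ) * ∑' p : ℕ, a p * (x:ℂ) ^ p)
      (𝓝[Ioo (0:ℝ) 1] 1) (𝓝 (D * (Real.Gamma α : ℂ))) := by
  have hα0 : 0 < α := lt_of_lt_of_le one_pos hα
  have hdpos : ∀ p, 0 < dseq α p := dseq_pos α hα0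
  -- a p = (a p / d p) * d p
  have ha_eq : ∀ p, a p = (a p / ((dseq α p : ℝ) : ℂ)) * ((dseq α p : ℝ) : ℂ) := by
    intro p
    rw [div_mul_cancel₀]
    exact_mod_cast (hdpos p).ne'
  -- summability of ‖a p‖ * x ^ p style series
  have hdne : ∀ p, ((dseq α p : ℝ) : ℂ) ≠ 0 := fun p => by exact_mod_cast (hdpos p).ne'
  have hbound : ∀ᶠ p : ℕ in atTop, ‖a p‖ ≤ (‖D‖ + 1) * dseq α p := by
    have := h.norm.eventually_le_const (lt_add_one ‖D‖)
    filter_upwards [this] with p hp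
    calc ‖a p‖ = ‖a p / ((dseq α p : ℝ) : ℂ) * ((dseq α p : ℝ) : ℂ)‖ := by
          rw [div_mul_cancel₀ _ (hdne p)]
      _ = ‖a p / ((dseq α p : ℝ) : ℂ)‖ * dseq α p := by
          rw [norm_mul, Complex.norm_real, Real.norm_of_nonneg (hdpos p).le]
      _ ≤ (‖D‖ + 1) * dseq α p := mul_le_mul_of_nonneg_right hp (hdpos p).le
  have hsum : ∀ x : ℝ, x ∈ Ioo (0:ℝ) 1 → Summable fun p : ℕ => a p * (x:ℂ) ^ p := by
    intro x hx
    apply Summable.of_norm_bounded_eventually_nat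
      (((summable_dseq_mul_pow α hα0 hx.1.le hx.2)).mul_left _)
    filter_upwards [hbound] with p hp
    rw [norm_pow_term x hx.1.le]
    calc ‖a p‖ * x ^ p ≤ ((‖D‖ + 1) * dseq α p) * x ^ p :=
          mul_le_mul_of_nonneg_right hp (pow_nonneg hx.1.le p)
      _ = (‖D‖ + 1) * (dseq α p * x ^ p) := by ring
  refine ⟨hsum, ?_⟩
  rw [Metric.tendsto_nhdsWithin_nhds]
  intro ε hε
  set G := Real.Gamma α with hG
  have hGpos : 0 < G := Real.Gamma_pos_of_pos hα0
  set ε' : ℝ := ε / (2 * (G + 1)) with hε'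
  have hε'pos : 0 < ε' := by positivity
  -- choose N
  have hev : ∀ᶠ p : ℕ in atTop, ‖a p / ((dseq α p : ℝ) : ℂ) - D‖ ≤ ε' := by
    have := (h.sub_const D).norm
    simp only [sub_self, norm_zero] at this
    exact this.eventually_le_const hε'pos
  obtain ⟨N, hN⟩ := hev.exists_forall_of_atTop
  have hNbound : ∀ p, N ≤ p → ‖a p - D * ((dseq α p : ℝ) : ℂ)‖ ≤ ε' * dseq α p := by
    intro p hp
    have hd : ((dseq α p : ℝ) : ℂ) ≠ 0 := by exact_mod_cast (hdpos p).ne'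
    have : a p - D * ((dseq α p : ℝ) : ℂ)
        = (a p / ((dseq α p : ℝ) : ℂ) - D) * ((dseq α p : ℝ) : ℂ) := by
      field_simp
    rw [this, norm_mul, Complex.norm_real, Real.norm_of_nonneg (hdpos p).le]
    exact mul_le_mul_of_nonneg_right (hN p hp) (hdpos p).le
  set e : ℕ → ℂ := fun p => a p - D * ((dseq α p : ℝ) : ℂ) with he
  set M : ℝ := ∑ p ∈ Finset.range N, ‖e p‖ with hM
  have hMnn : 0 ≤ M := Finset.sum_nonneg fun p _ => norm_nonneg _
  refine ⟨min 1 (ε / (2 * (M + 1))), lt_min one_pos (div_pos hε (by linarith)), ?_⟩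
  intro x hx hdx
  obtain ⟨hx0, hx1⟩ := hx
  have h1x : 0 < 1 - x := by linarith
  have hdx' : 1 - x < ε / (2 * (M + 1)) := by
    have : dist x 1 = 1 - x := by
      rw [Real.dist_eq, abs_of_nonpos (by linarith)]
      ring
    have h2 := lt_of_lt_of_le hdx (min_le_right _ _)
    linarith [this ▸ h2]
  -- summabilities
  have hsd : Summable fun p : ℕ => dseq α p * x ^ p :=
    summable_dseq_mul_pow α hα0 hx0.le hx1
  have hsa : Summable fun p : ℕ => a p * (x:ℂ) ^ p := hsum x ⟨hx0, hx1⟩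
  have hsD : Summable fun p : ℕ => D * ((dseq α p : ℝ) : ℂ) * (x:ℂ) ^ p := by
    have : Summable fun p : ℕ => ((dseq α p * x ^ p : ℝ) : ℂ) := Complex.summable_ofReal.mpr hsd
    have := this.mul_left D
    apply this.congr
    intro p
    push_cast
    ring
  have hse : Summable fun p : ℕ => e p * (x:ℂ) ^ p := by
    apply (hsa.sub hsD).congr
    intro p
    simp only [he]
    ring
  have hsen : Summable fun p : ℕ => ‖e p‖ * x ^ p := by
    apply Summable.of_norm_bounded_eventually_nat
      (hsd.mul_left _)
    filter_upwards [eventually_ge_atTop N] with p hp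
    rw [Real.norm_of_nonneg (by positivity)]
    calc ‖e p‖ * x ^ p ≤ (ε' * dseq α p) * x ^ p :=
          mul_le_mul_of_nonneg_right (hNbound p hp) (by positivity)
      _ = ε' * (dseq α p * x ^ p) := by ring
  -- the tsum of dseq
  have htd : ∑' p : ℕ, dseq α p * x ^ p = G * (1 - x) ^ (-α : ℝ) :=
    tsum_dseq_mul_pow α hα0 hx0 hx1
  -- key identity
  have hpow_cancel : ((1 - x) ^ α : ℝ) * ((1 - x) ^ (-α : ℝ)) = 1 := by
    rw [← Real.rpow_add h1x]
    norm_num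
  have hkey : (((1 - x) ^ α : ℝ) : ℂ) * (∑' p : ℕ, a p * (x:ℂ) ^ p)
      - D * (G : ℂ)
      = (((1 - x) ^ α : ℝ) : ℂ) * ∑' p : ℕ, e p * (x:ℂ) ^ p := by
    have hte : ∑' p : ℕ, e p * (x:ℂ) ^ p
        = (∑' p : ℕ, a p * (x:ℂ) ^ p) - ∑' p : ℕ, D * ((dseq α p : ℝ) : ℂ) * (x:ℂ) ^ p := by
      rw [← Summable.tsum_sub hsa hsD]
      apply tsum_congr
      intro p
      simp only [he]
      ring
    have htD : ∑' p : ℕ, D * ((dseq α p : ℝ) : ℂ) * (x:ℂ) ^ p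
        = D * ((G * (1 - x) ^ (-α : ℝ) : ℝ) : ℂ) := by
      rw [← htd]
      have : ∑' p : ℕ, D * ((dseq α p : ℝ) : ℂ) * (x:ℂ) ^ p
          = D * ∑' p : ℕ, ((dseq α p * x ^ p : ℝ) : ℂ) := by
        rw [← tsum_mul_left]
        apply tsum_congr
        intro p
        push_cast
        ring
      rw [this, Complex.ofReal_tsum]
    rw [hte, htD, mul_sub]
    have : (((1 - x) ^ α : ℝ) : ℂ) * (D * ((G * (1 - x) ^ (-α : ℝ) : ℝ) : ℂ)) = D * (G : ℂ) := by
      push_cast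
      have : (((1 - x) ^ α : ℝ) : ℂ) * (((1 - x) ^ (-α : ℝ) : ℝ) : ℂ) = 1 := by
        rw [← Complex.ofReal_mul, hpow_cancel, Complex.ofReal_one]
      calc (((1 - x) ^ α : ℝ) : ℂ) * (D * ((G:ℂ) * (((1 - x) ^ (-α : ℝ) : ℝ) : ℂ)))
          = D * (G:ℂ) * ((((1 - x) ^ α : ℝ) : ℂ) * (((1 - x) ^ (-α : ℝ) : ℝ) : ℂ)) := by ring
        _ = D * (G : ℂ) := by rw [this, mul_one]
    rw [this]
  -- estimate
  rw [Complex.dist_eq, hkey]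
  have hnorm1 : ‖∑' p : ℕ, e p * (x:ℂ) ^ p‖ ≤ M + ε' * (G * (1 - x) ^ (-α : ℝ)) := by
    have h1 : ‖∑' p : ℕ, e p * (x:ℂ) ^ p‖ ≤ ∑' p : ℕ, ‖e p‖ * x ^ p := by
      have := norm_tsum_le_tsum_norm (f := fun p : ℕ => e p * (x:ℂ) ^ p) ?_
      · apply this.trans_eq
        apply tsum_congr
        intro p
        exact norm_pow_term x hx0.le (e p) p
      · apply hsen.congr
        intro p
        exact (norm_pow_term x hx0.le (e p) p).symm
    apply h1.trans
    rw [← Summable.sum_add_tsum_nat_add N hsen]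
    have hhead : ∑ p ∈ Finset.range N, ‖e p‖ * x ^ p ≤ M := by
      apply Finset.sum_le_sum
      intro p _
      calc ‖e p‖ * x ^ p ≤ ‖e p‖ * 1 :=
            mul_le_mul_of_nonneg_left (pow_le_one₀ hx0.le hx1.le) (norm_nonneg _)
        _ = ‖e p‖ := mul_one _
    have htail : ∑' p : ℕ, ‖e (p + N)‖ * x ^ (p + N)
        ≤ ε' * (G * (1 - x) ^ (-α : ℝ)) := by
      have hstep : ∑' p : ℕ, ‖e (p + N)‖ * x ^ (p + N)
          ≤ ∑' p : ℕ, ε' * (dseq α (p + N) * x ^ (p + N)) := by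
        apply Summable.tsum_le_tsum
        · intro p
          calc ‖e (p + N)‖ * x ^ (p + N) ≤ (ε' * dseq α (p + N)) * x ^ (p + N) :=
              mul_le_mul_of_nonneg_right (hNbound (p + N) (Nat.le_add_left N p)) (by positivity)
            _ = ε' * (dseq α (p + N) * x ^ (p + N)) := by ring
        · exact (summable_nat_add_iff N).mpr hsen
        · exact ((summable_nat_add_iff N).mpr hsd).mul_left ε'
      apply hstep.trans
      rw [tsum_mul_left]
      apply mul_le_mul_of_nonneg_left _ hε'pos.le
      rw [← htd]
      calc ∑' p : ℕ, dseq α (p + N) * x ^ (p + N)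
          ≤ ∑ p ∈ Finset.range N, dseq α p * x ^ p + ∑' p : ℕ, dseq α (p + N) * x ^ (p + N) := by
            have : 0 ≤ ∑ p ∈ Finset.range N, dseq α p * x ^ p :=
              Finset.sum_nonneg fun p _ => mul_nonneg (hdpos p).le (pow_nonneg hx0.le p)
            linarith
        _ = ∑' p : ℕ, dseq α p * x ^ p := Summable.sum_add_tsum_nat_add N hsd
    linarith
  have hfinal : ‖(((1 - x) ^ α : ℝ) : ℂ) * ∑' p : ℕ, e p * (x:ℂ) ^ p‖
      ≤ (1 - x) ^ α * M + ε' * G := by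
    rw [norm_mul, Complex.norm_real, Real.norm_of_nonneg (Real.rpow_nonneg h1x.le α)]
    calc (1 - x) ^ α * ‖∑' p : ℕ, e p * (x:ℂ) ^ p‖
        ≤ (1 - x) ^ α * (M + ε' * (G * (1 - x) ^ (-α : ℝ))) :=
          mul_le_mul_of_nonneg_left hnorm1 (Real.rpow_nonneg h1x.le α)
      _ = (1 - x) ^ α * M + ε' * G * ((1 - x) ^ α * (1 - x) ^ (-α : ℝ)) := by ring
      _ = (1 - x) ^ α * M + ε' * G := by rw [hpow_cancel, mul_one]
  apply lt_of_le_of_lt hfinal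
  have hb1 : (1 - x) ^ α * M < ε / 2 := by
    have hle : (1 - x) ^ α ≤ 1 - x := by
      calc (1 - x) ^ α ≤ (1 - x) ^ (1:ℝ) :=
            Real.rpow_le_rpow_of_exponent_ge h1x (by linarith) hα
        _ = 1 - x := Real.rpow_one _
    calc (1 - x) ^ α * M ≤ (1 - x) * M :=
          mul_le_mul_of_nonneg_right hle hMnn
      _ ≤ (1 - x) * (M + 1) := by nlinarith
      _ < (ε / (2 * (M + 1))) * (M + 1) := by
          apply mul_lt_mul_of_pos_right hdx' (by positivity)
      _ = ε / 2 := by field_simp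
  have hb2 : ε' * G < ε / 2 := by
    rw [hε']
    rw [div_mul_eq_mul_div]
    rw [div_lt_div_iff₀ (by positivity) (by norm_num)]
    nlinarith
  linarith

end Darboux

def cpowArg (w : ℂ) (θ : ℝ) (z : ℂ) : ℂ :=
  Complex.exp (z * (((Real.log ‖w‖ : ℝ) : ℂ) + (θ : ℂ) * Complex.I))

lemma cpowArg_mul_cpowArg (w : ℂ) (θ : ℝ) (z₁ z₂ : ℂ) :
    cpowArg w θ z₁ * cpowArg w θ z₂ = cpowArg w θ (z₁ + z₂) := by
  rw [cpowArg, cpowArg, cpowArg, ← Complex.exp_add]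
  congr 1
  ring

set_option maxHeartbeats 1000000 in
/-- **Darboux's method along a segment.** If
`p^{1−α}·(v_t−v_s)^{p−β}·c_p → C·(v_t−v_s)^{−α}`, then for every `x ∈ (0,1)` the
series `f(x) = Σ_p c_p·x^{p−β}·(v_t−v_s)^{p−β}` converges absolutely, and
`(1−x)^α·(v_t−v_s)^α·f(x) → C·Γ(α)` as `x → 1⁻`. -/
theorem darboux_segment
    (α : ℝ) (hα : 1 ≤ α) (β C : ℂ) (vs vt : ℂ) (hvst : vs ≠ vt)
    (θ : ℝ)
    (hθ : vt - vs = ((‖vt - vs‖ : ℝ) : ℂ) * Complex.exp ((θ : ℂ) * Complex.I))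
    (c : ℕ → ℂ)
    (hlim : Tendsto
      (fun p : ℕ => (p : ℂ) ^ ((1 : ℂ) - (α : ℂ)) * cpowArg (vt - vs) θ ((p : ℂ) - β) * c p)
      atTop (𝓝 (C * cpowArg (vt - vs) θ (-(α : ℂ))))) :
    (∀ x : ℝ, x ∈ Set.Ioo (0 : ℝ) 1 →
      Summable fun p : ℕ => c p * (x : ℂ) ^ ((p : ℂ) - β) * cpowArg (vt - vs) θ ((p : ℂ) - β)) ∧
    Tendsto
      (fun x : ℝ =>
        ((1 - x : ℝ) : ℂ) ^ (α : ℂ) * cpowArg (vt - vs) θ (α : ℂ) *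
          ∑' p : ℕ, c p * (x : ℂ) ^ ((p : ℂ) - β) * cpowArg (vt - vs) θ ((p : ℂ) - β))
      (𝓝[Set.Ioo (0 : ℝ) 1] 1) (𝓝 (C * Complex.Gamma (α : ℂ))) := by
  classical
  have hα0 : 0 < α := lt_of_lt_of_le one_pos hα
  set E : ℂ → ℂ := fun z => cpowArg (vt - vs) θ z with hE
  set a : ℕ → ℂ := fun p => c p * E ((p : ℂ) - β) with ha
  set D : ℂ := C * E (-(α : ℂ)) with hD
  -- convert hlim into the ratio hypothesis
  have hseq : Tendsto (fun p : ℕ => a p / ((Darboux.dseq α p : ℝ) : ℂ)) atTop (𝓝 D) := by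
    have hq := Darboux.gammaRatio α hα0
    have hqC : Tendsto
        (fun p : ℕ => (((p:ℝ) ^ (α - 1) * p.factorial / Real.Gamma (p + α) : ℝ) : ℂ))
        atTop (𝓝 ((1 : ℝ) : ℂ)) := (Complex.continuous_ofReal.tendsto 1).comp hq
    rw [Complex.ofReal_one] at hqC
    have hmul := hlim.mul hqC
    rw [mul_one] at hmul
    apply hmul.congr'
    filter_upwards [eventually_ge_atTop 1] with p hp
    have hp' : (0:ℝ) < p := by exact_mod_cast hp
    have hdp : 0 < Darboux.dseq α p := Darboux.dseq_pos α hα0 p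
    have hq_eq : ((p:ℝ) ^ (α - 1) * p.factorial / Real.Gamma (p + α) : ℝ)
        = (p:ℝ) ^ (α - 1) / Darboux.dseq α p := by
      rw [Darboux.dseq, div_div_eq_mul_div]
    have hcpow : (p : ℂ) ^ ((1 : ℂ) - (α : ℂ)) = (((p:ℝ) ^ (1 - α) : ℝ) : ℂ) := by
      rw [Complex.ofReal_cpow hp'.le]
      push_cast
      norm_num
    have hcancel : (((p:ℝ) ^ (1 - α) : ℝ) : ℂ) * (((p:ℝ) ^ (α - 1) : ℝ) : ℂ) = 1 := by
      rw [← Complex.ofReal_mul, ← Real.rpow_add hp']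
      norm_num
    rw [hq_eq]
    push_cast [hcpow]
    rw [div_eq_mul_inv, div_eq_mul_inv]
    calc (((p:ℝ) ^ (1 - α) : ℝ) : ℂ) * E ((p:ℂ) - β) * c p
          * ((((p:ℝ) ^ (α - 1) : ℝ) : ℂ) * (((Darboux.dseq α p : ℝ) : ℂ))⁻¹)
        = ((((p:ℝ) ^ (1 - α) : ℝ) : ℂ) * (((p:ℝ) ^ (α - 1) : ℝ) : ℂ))
          * (c p * E ((p:ℂ) - β) * (((Darboux.dseq α p : ℝ) : ℂ))⁻¹) := by ring
      _ = a p * (((Darboux.dseq α p : ℝ) : ℂ))⁻¹ := by rw [hcancel, ha, one_mul]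
  obtain ⟨hsum, htend⟩ := Darboux.abelian α hα a D hseq
  -- rewrite the statement's series
  have hterm : ∀ x : ℝ, x ∈ Set.Ioo (0:ℝ) 1 → ∀ p : ℕ,
      c p * (x : ℂ) ^ ((p : ℂ) - β) * E ((p : ℂ) - β)
        = (a p * (x:ℂ) ^ p) * (x:ℂ) ^ (-β) := by
    intro x hx p
    have hx0 : (x:ℂ) ≠ 0 := by
      simpa using ne_of_gt hx.1
    have : (x : ℂ) ^ ((p : ℂ) - β) = (x:ℂ) ^ p * (x:ℂ) ^ (-β) := by
      rw [sub_eq_add_neg, Complex.cpow_add _ _ hx0, Complex.cpow_natCast]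
    rw [this, ha]
    ring
  constructor
  · intro x hx
    apply ((hsum x hx).mul_right ((x:ℂ) ^ (-β))).congr
    intro p
    exact (hterm x hx p).symm
  · -- limit part
    have hcont : Tendsto (fun x : ℝ => E (α:ℂ) * (x:ℂ) ^ (-β)) (𝓝[Set.Ioo (0:ℝ) 1] 1)
        (𝓝 (E (α:ℂ) * (1:ℂ) ^ (-β))) := by
      apply Tendsto.mono_left _ nhdsWithin_le_nhds
      apply Tendsto.const_mul
      have h1 : ContinuousAt (fun z : ℂ => z ^ (-β)) ((1:ℝ):ℂ) := by
        apply continuousAt_cpow_const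
        exact Or.inl (by norm_num)
      exact (h1.comp Complex.continuous_ofReal.continuousAt).tendsto
    have hmain := hcont.mul htend
    have hval : E (α:ℂ) * (1:ℂ) ^ (-β) * (D * ((Real.Gamma α : ℝ) : ℂ))
        = C * Complex.Gamma (α:ℂ) := by
      rw [Complex.one_cpow, mul_one, hD, ← Complex.Gamma_ofReal]
      have : E (α:ℂ) * (C * E (-(α:ℂ))) = C * (E (α:ℂ) * E (-(α:ℂ))) := by ring
      rw [← mul_assoc, this, hE]
      rw [cpowArg_mul_cpowArg]
      simp [cpowArg]
    rw [hval] at hmain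
    apply hmain.congr'
    filter_upwards [self_mem_nhdsWithin] with x hx
    have h1x : (0:ℝ) ≤ 1 - x := by
      have := hx.2
      linarith
    have hcast : ((1 - x : ℝ) : ℂ) ^ (α : ℂ) = (((1 - x) ^ α : ℝ) : ℂ) := by
      rw [Complex.ofReal_cpow h1x]
    have htsum : ∑' p : ℕ, c p * (x : ℂ) ^ ((p : ℂ) - β) * E ((p : ℂ) - β)
        = (∑' p : ℕ, a p * (x:ℂ) ^ p) * (x:ℂ) ^ (-β) := by
      rw [← tsum_mul_right]
      exact tsum_congr (hterm x hx)
    rw [hcast, htsum]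
    ring

end
end

section
/- Darboux's method along a ray (second part of the Darboux lemma, Lemma \ref{Lem:AnaLim}): let α ≥ 1 be a real number, β, C ∈ ℂ, and let v_s ≠ v_t be complex numbers; let θ ∈ ℝ be such that v_s − v_t = |v_s − v_t|·e^{iθ}, and for z ∈ ℂ write (v_s−v_t)^z := exp(z·(log|v_s−v_t| + iθ)). Let (c_p)_{p≥0} be complex numbers such that p^{1−α}·(v_s−v_t)^{−p−β}·c_p → C·(v_s−v_t)^{−α} as p → ∞. Then for every x > 1 the series f(x) := Σ_{p≥0} c_p·x^{−p−β}·(v_s−v_t)^{−p−β} converges absolutely (f(x) is the value of the series Σ_p c_p·(ξ−v_t)^{−p−β} at the point ξ = v_t + x·(v_s−v_t) of the open ray starting at v_s in direction e^{iθ}, with the argument of ξ−v_t taken equal to θ), and (x−1)^α·(v_s−v_t)^α·f(x) → C·Γ(α) as x → 1⁺; equivalently, Σ_p c_p·(ξ−v_t)^{−p−β} = C·Γ(α)·(ξ−v_s)^{−α} + o(|ξ−v_s|^{−α}) as ξ → v_s along the ray [v_s, ∞·e^{iθ}), with the argument of ξ−v_s taken equal to θ. -/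
/-!
Statement 14: Darboux's method along a ray (second part of Lemma 2.12).
-/

noncomputable section

open Filter MeasureTheory Set
open scoped Topology

/-- integrable dominating function -/
lemma darboux_bound_integrable (α : ℝ) (hα : 1 ≤ α) :
    IntegrableOn (fun u : ℝ => Real.exp (-(u/2)) * (u+1) ^ (α-1)) (Ioi 0) := by
  have h1 : IntegrableOn (fun u : ℝ => Real.exp (-u) * u ^ (α-1)) (Ioi 0) :=
    Real.GammaIntegral_convergent (by linarith)
  have h2 : IntegrableOn (fun u : ℝ => Real.exp (-((1/2)*u)) * ((1/2)*u) ^ (α-1)) (Ioi 0) := by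
    have := (integrableOn_Ioi_comp_mul_left_iff
      (fun u : ℝ => Real.exp (-u) * u ^ (α-1)) 0 (by norm_num : (0:ℝ) < 1/2)).mpr
      (by simpa using h1)
    simpa using this
  have h3 : IntegrableOn (fun u : ℝ => Real.exp (-(u/2)) * u ^ (α-1)) (Ioi 0) := by
    have h4 : IntegrableOn (fun u : ℝ => (2:ℝ)^(α-1) * (Real.exp (-((1/2)*u)) * ((1/2)*u) ^ (α-1))) (Ioi 0) :=
      h2.const_mul _
    apply h4.congr_fun ?_ measurableSet_Ioi
    intro u hu
    have hu0 : (0:ℝ) < u := hu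
    show (2:ℝ)^(α-1) * (Real.exp (-(1/2*u)) * (1/2*u) ^ (α-1)) = Real.exp (-(u/2)) * u ^ (α-1)
    have hm : ((1/2)*u : ℝ) ^ (α-1) = (1/2:ℝ)^(α-1) * u^(α-1) :=
      Real.mul_rpow (by norm_num) hu0.le
    have h12 : (2:ℝ)^(α-1) * (1/2:ℝ)^(α-1) = 1 := by
      rw [← Real.mul_rpow (by norm_num) (by norm_num)]
      norm_num
    have he : (-(1/2*u) : ℝ) = -(u/2) := by ring
    rw [hm, he]
    linear_combination (Real.exp (-(u/2)) * u ^ (α-1)) * h12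
  have h5 : IntegrableOn (fun u : ℝ => Real.exp (-(u/2))) (Ioi 0) := by
    apply (exp_neg_integrableOn_Ioi 0 (by norm_num : (0:ℝ) < 1/2)).congr_fun ?_ measurableSet_Ioi
    intro u _
    show Real.exp (-(1/2) * u) = Real.exp (-(u/2))
    ring_nf
  have hint : Integrable (fun u : ℝ => (2:ℝ)^(α-1) *
      (Real.exp (-(u/2)) * u ^ (α-1) + Real.exp (-(u/2))))
      (volume.restrict (Ioi 0)) := ((h3.add h5).const_mul _)
  apply hint.mono'
  · apply Continuous.aestronglyMeasurable
    exact (Real.continuous_exp.comp (continuous_id.div_const 2).neg).mul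
      ((continuous_id.add continuous_const).rpow_const
        (fun u => Or.inr (by linarith)))
  · refine (ae_restrict_iff' measurableSet_Ioi).mpr (ae_of_all _ ?_)
    intro u hu
    have hu0 : (0:ℝ) < u := hu
    have hexp : (0:ℝ) < Real.exp (-(u/2)) := Real.exp_pos _
    have hrp : (0:ℝ) ≤ (u+1) ^ (α-1) := Real.rpow_nonneg (by linarith) _
    rw [Real.norm_eq_abs, abs_of_nonneg (by positivity)]
    have hkey : (u+1) ^ (α-1) ≤ (2:ℝ)^(α-1) * (u^(α-1) + 1) := by
      rcases le_total u 1 with h | h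
      · have h1 : (u+1:ℝ) ^ (α-1) ≤ (2:ℝ)^(α-1) :=
          Real.rpow_le_rpow (by linarith) (by linarith) (by linarith)
        have h2 : (0:ℝ) ≤ u^(α-1) := Real.rpow_nonneg hu0.le _
        nlinarith [Real.rpow_nonneg (by norm_num : (0:ℝ) ≤ 2) (α-1)]
      · have h1 : (u+1:ℝ) ^ (α-1) ≤ (2*u)^(α-1) :=
          Real.rpow_le_rpow (by linarith) (by linarith) (by linarith)
        have h2 : ((2:ℝ)*u)^(α-1) = (2:ℝ)^(α-1) * u^(α-1) :=
          Real.mul_rpow (by norm_num) hu0.le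
        nlinarith [Real.rpow_nonneg (by norm_num : (0:ℝ) ≤ 2) (α-1)]
    nlinarith

/-- partition of `Ioi 0` -/
lemma darboux_iUnion_Ioc {s : ℝ} (hs : 0 < s) :
    (⋃ p : ℕ, Ioc ((p:ℝ)*s) (((p:ℝ)+1)*s)) = Ioi 0 := by
  ext u
  simp only [mem_iUnion, mem_Ioc, mem_Ioi]
  constructor
  · rintro ⟨p, h1, _⟩
    have : (0:ℝ) ≤ (p:ℝ)*s := by positivity
    linarith
  · intro hu
    have hds : 0 < u/s := div_pos hu hs
    have h1 : 1 ≤ ⌈u/s⌉₊ := Nat.one_le_ceil_iff.mpr hds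
    refine ⟨⌈u/s⌉₊ - 1, ?_, ?_⟩
    · have hc : ((⌈u/s⌉₊ - 1 : ℕ) : ℝ) = (⌈u/s⌉₊:ℝ) - 1 := by
        push_cast [h1]; ring
      rw [hc]
      have h2 : (⌈u/s⌉₊:ℝ) < u/s + 1 := Nat.ceil_lt_add_one hds.le
      have h3 : ((⌈u/s⌉₊:ℝ) - 1) * s < (u/s) * s := by
        apply mul_lt_mul_of_pos_right (by linarith) hs
      rwa [div_mul_cancel₀ u hs.ne'] at h3
    · have hc : ((⌈u/s⌉₊ - 1 : ℕ) : ℝ) = (⌈u/s⌉₊:ℝ) - 1 := by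
        push_cast [h1]; ring
      rw [hc, sub_add_cancel]
      have h2 : u/s ≤ (⌈u/s⌉₊:ℝ) := Nat.le_ceil _
      have h3 : (u/s) * s ≤ (⌈u/s⌉₊:ℝ) * s := mul_le_mul_of_nonneg_right h2 hs.le
      rwa [div_mul_cancel₀ u hs.ne'] at h3

lemma darboux_disjoint {s : ℝ} (hs : 0 < s) :
    Pairwise (Function.onFun Disjoint fun p : ℕ => Ioc ((p:ℝ)*s) (((p:ℝ)+1)*s)) := by
  intro i j hij
  have key : ∀ i j : ℕ, i < j →
      Disjoint (Ioc ((i:ℝ)*s) (((i:ℝ)+1)*s)) (Ioc ((j:ℝ)*s) (((j:ℝ)+1)*s)) := by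
    intro i j h
    refine Ioc_disjoint_Ioc.mpr ?_
    have : ((i:ℝ)+1) * s ≤ (j:ℝ) * s := by
      have : ((i:ℝ)+1) ≤ (j:ℝ) := by exact_mod_cast Nat.succ_le_of_lt h
      nlinarith
    exact min_le_of_left_le (le_max_of_le_right this)
  rcases hij.lt_or_gt with h | h
  · exact key i j h
  · exact (key j i h).symm

/-- summability of the model series -/
lemma darboux_summable (α : ℝ) {x : ℝ} (hx : 1 < x) :
    Summable (fun p : ℕ => ((p:ℝ)+1) ^ (α-1) * (1/x) ^ (p+1)) := by
  set k : ℕ := ⌈α - 1⌉₊ with hk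
  have hx0 : (0:ℝ) < x := by linarith
  have hr : |1/x| < 1 := by
    rw [abs_of_pos (by positivity)]
    rw [div_lt_one hx0]; linarith
  have h1 : Summable (fun n : ℕ => (n:ℝ)^k * (1/x)^n) := by
    have := summable_pow_mul_geometric_of_norm_lt_one (R := ℝ) k (r := 1/x)
      (by rw [Real.norm_eq_abs]; exact hr)
    simpa using this
  have h2 : Summable (fun p : ℕ => ((p:ℝ)+1)^k * (1/x)^(p+1)) := by
    have := (summable_nat_add_iff (f := fun n : ℕ => (n:ℝ)^k * (1/x)^n) 1).mpr h1
    apply this.congr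
    intro p; push_cast; ring
  apply Summable.of_nonneg_of_le ?_ ?_ h2
  · intro p
    positivity
  · intro p
    have hb : (1:ℝ) ≤ (p:ℝ)+1 := by
      have := Nat.cast_nonneg (α := ℝ) p; linarith
    have : ((p:ℝ)+1) ^ (α-1) ≤ ((p:ℝ)+1)^(k:ℝ) :=
      Real.rpow_le_rpow_of_exponent_le hb (Nat.le_ceil _)
    rw [Real.rpow_natCast] at this
    have hp : (0:ℝ) ≤ (1/x)^(p+1) := by positivity
    exact mul_le_mul_of_nonneg_right this hp

lemma darboux_tendsto_rpow (α : ℝ) (hα : 0 < α) :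
    Tendsto (fun x : ℝ => (x-1)^α) (𝓝[>] (1:ℝ)) (𝓝 0) := by
  have h1 : Tendsto (fun x : ℝ => x - 1) (𝓝[>] (1:ℝ)) (𝓝 0) := by
    have : Tendsto (fun x : ℝ => x - 1) (𝓝 (1:ℝ)) (𝓝 0) := by
      have := tendsto_id (x := 𝓝 (1:ℝ)) |>.sub (tendsto_const_nhds (x := (1:ℝ)))
      simpa using this
    exact this.mono_left nhdsWithin_le_nhds
  have h2 : ContinuousAt (fun t : ℝ => t ^ α) 0 :=
    Real.continuousAt_rpow_const 0 α (Or.inr hα.le)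
  have := h2.tendsto.comp h1
  rwa [Real.zero_rpow hα.ne'] at this

lemma darboux_tendsto_sub_one : Tendsto (fun x : ℝ => x - 1) (𝓝[>] (1:ℝ)) (𝓝 0) := by
  have : Tendsto (fun x : ℝ => x - 1) (𝓝 (1:ℝ)) (𝓝 0) := by
    have := tendsto_id (x := 𝓝 (1:ℝ)) |>.sub (tendsto_const_nhds (x := (1:ℝ)))
    simpa using this
  exact this.mono_left nhdsWithin_le_nhds

lemma darboux_lemK (α : ℝ) (hα : 1 ≤ α) :
    Tendsto (fun x : ℝ => (x-1)^α * ∑' p : ℕ, ((p:ℝ)+1)^(α-1) * (1/x)^(p+1))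
      (𝓝[>] (1:ℝ)) (𝓝 (Real.Gamma α)) := by
  set F : ℝ → ℝ → ℝ := fun x u =>
    Real.exp (-(⌈u/(x-1)⌉₊:ℝ) * Real.log x) * ((x-1) * (⌈u/(x-1)⌉₊:ℝ)) ^ (α-1) with hF
  have hmeas : ∀ x : ℝ, Measurable (F x) := by
    intro x
    have h1 : Measurable fun u : ℝ => ⌈u/(x-1)⌉₊ := (measurable_id.div_const (x-1)).nat_ceil
    exact (measurable_from_top (f := fun n : ℕ =>
      Real.exp (-(n:ℝ) * Real.log x) * ((x-1) * (n:ℝ)) ^ (α-1))).comp h1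
  have hdom : ∀ x ∈ Ioc (1:ℝ) 2, ∀ u ∈ Ioi (0:ℝ),
      ‖F x u‖ ≤ Real.exp (-(u/2)) * (u+1)^(α-1) := by
    intro x hx u hu
    have hx1 : 1 < x := hx.1
    have hs : 0 < x - 1 := by linarith
    have hs1 : x - 1 ≤ 1 := by linarith [hx.2]
    have hu0 : (0:ℝ) < u := hu
    set q : ℝ := (⌈u/(x-1)⌉₊ : ℝ) with hq
    have hq0 : 0 ≤ q := by positivity
    have hlow : u ≤ (x-1) * q := by
      have h := Nat.le_ceil (u/(x-1))
      have := (div_le_iff₀ hs).mp h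
      linarith
    have hup : (x-1) * q ≤ u + 1 := by
      have h := Nat.ceil_lt_add_one (le_of_lt (div_pos hu0 hs))
      have h2 : q < u/(x-1) + 1 := h
      have h3 : (x-1) * q < (x-1) * (u/(x-1) + 1) := by
        exact mul_lt_mul_of_pos_left h2 hs
      have h4 : (x-1) * (u/(x-1) + 1) = u + (x-1) := by
        field_simp
      linarith
    have hlog : (x-1)/2 ≤ Real.log x := by
      have h1 := Real.log_le_sub_one_of_pos (inv_pos.mpr (by linarith : (0:ℝ) < x))
      rw [Real.log_inv] at h1
      have h2 : Real.log x ≥ 1 - x⁻¹ := by linarith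
      have h3 : 1 - x⁻¹ = (x-1)/x := by field_simp
      have h4 : (x-1)/2 ≤ (x-1)/x := by
        apply div_le_div_of_nonneg_left hs.le (by linarith) hx.2
      rw [h3] at h2
      linarith
    have hexp : Real.exp (-q * Real.log x) ≤ Real.exp (-(u/2)) := by
      apply Real.exp_le_exp.mpr
      have h1 : q * ((x-1)/2) ≤ q * Real.log x := mul_le_mul_of_nonneg_left hlog hq0
      nlinarith
    have hpow : ((x-1) * q) ^ (α-1) ≤ (u+1) ^ (α-1) :=
      Real.rpow_le_rpow (by positivity) hup (by linarith)
    have hFnn : 0 ≤ F x u := by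
      apply mul_nonneg (Real.exp_pos _).le (Real.rpow_nonneg (by positivity) _)
    rw [Real.norm_eq_abs, abs_of_nonneg hFnn]
    exact mul_le_mul hexp hpow (Real.rpow_nonneg (by positivity) _) (Real.exp_pos _).le
  have hint : ∀ x ∈ Ioc (1:ℝ) 2, IntegrableOn (F x) (Ioi 0) := by
    intro x hx
    exact (darboux_bound_integrable α hα).mono' ((hmeas x).aestronglyMeasurable)
      ((ae_restrict_iff' measurableSet_Ioi).mpr (ae_of_all _ (hdom x hx)))
  have heq : ∀ x ∈ Ioc (1:ℝ) 2,
      (x-1)^α * ∑' p : ℕ, ((p:ℝ)+1)^(α-1) * (1/x)^(p+1) = ∫ u in Ioi 0, F x u := by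
    intro x hx
    have hx1 : 1 < x := hx.1
    have hs : 0 < x - 1 := by linarith
    have hx0 : (0:ℝ) < x := by linarith
    have hU := darboux_iUnion_Ioc hs
    rw [← hU, integral_iUnion (fun p => measurableSet_Ioc) (darboux_disjoint hs)
        (by rw [hU]; exact hint x hx)]
    have hpiece : ∀ p : ℕ, (∫ u in Ioc ((p:ℝ)*(x-1)) (((p:ℝ)+1)*(x-1)), F x u)
        = (x-1)^α * (((p:ℝ)+1)^(α-1) * (1/x)^(p+1)) := by
      intro p
      have hceil : ∀ u ∈ Ioc ((p:ℝ)*(x-1)) (((p:ℝ)+1)*(x-1)), ⌈u/(x-1)⌉₊ = p + 1 := by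
        intro u hu
        rw [Nat.ceil_eq_iff (Nat.succ_ne_zero p)]
        constructor
        · have := hu.1
          have h2 : (p:ℝ) < u/(x-1) := (lt_div_iff₀ hs).mpr (by linarith)
          simpa using h2
        · have := hu.2
          have h2 : u/(x-1) ≤ (p:ℝ)+1 := (div_le_iff₀ hs).mpr (by linarith)
          push_cast
          exact h2
      have hcongr : EqOn (F x)
          (fun _ : ℝ => Real.exp (-((p:ℝ)+1) * Real.log x) *
            ((x-1) * ((p:ℝ)+1)) ^ (α-1))
          (Ioc ((p:ℝ)*(x-1)) (((p:ℝ)+1)*(x-1))) := by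
        intro u hu
        simp only [hF]
        rw [hceil u hu]
        push_cast
        ring_nf
      rw [setIntegral_congr_fun measurableSet_Ioc hcongr, setIntegral_const, smul_eq_mul,
        Real.volume_real_Ioc]
      rw [show ((p:ℝ)+1)*(x-1) - (p:ℝ)*(x-1) = x - 1 by ring, max_eq_left hs.le]
      have hexp : Real.exp (-((p:ℝ)+1) * Real.log x) = (1/x)^(p+1) := by
        rw [show (-((p:ℝ)+1) * Real.log x) = (((p:ℕ)+1 : ℕ):ℝ) * (-Real.log x) by push_cast; ring,
          ← Real.log_inv, Real.exp_nat_mul, Real.exp_log (by positivity), one_div]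
      have hrp : ((x-1) * ((p:ℝ)+1)) ^ (α-1) = (x-1)^(α-1) * ((p:ℝ)+1)^(α-1) :=
        Real.mul_rpow hs.le (by positivity)
      have hsa : (x-1) * (x-1)^(α-1) = (x-1)^α := by
        have h := Real.rpow_add hs 1 (α-1)
        rw [Real.rpow_one] at h
        rw [show (1:ℝ) + (α-1) = α by ring] at h
        exact h.symm
      rw [hexp, hrp, ← hsa]
      ring
    rw [tsum_congr hpiece, tsum_mul_left]
  have hdct : Tendsto (fun x : ℝ => ∫ u in Ioi 0, F x u) (𝓝[>] (1:ℝ))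
      (𝓝 (∫ u in Ioi 0, Real.exp (-u) * u^(α-1))) := by
    apply tendsto_integral_filter_of_dominated_convergence
      (fun u : ℝ => Real.exp (-(u/2)) * (u+1)^(α-1))
    · exact Eventually.of_forall (fun x => (hmeas x).aestronglyMeasurable)
    · filter_upwards [Ioc_mem_nhdsGT one_lt_two] with x hx
      exact (ae_restrict_iff' measurableSet_Ioi).mpr (ae_of_all _ (hdom x hx))
    · exact darboux_bound_integrable α hα
    · refine (ae_restrict_iff' measurableSet_Ioi).mpr (ae_of_all _ ?_)
      intro u hu
      have hu0 : (0:ℝ) < u := hu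
      have hA : Tendsto (fun x : ℝ => (x-1) * (⌈u/(x-1)⌉₊:ℝ)) (𝓝[>] (1:ℝ)) (𝓝 u) := by
        have hh : Tendsto (fun x : ℝ => u + (x-1)) (𝓝[>] (1:ℝ)) (𝓝 u) := by
          have := (tendsto_const_nhds (x := u) (f := 𝓝[>] (1:ℝ))).add darboux_tendsto_sub_one
          simpa using this
        apply tendsto_of_tendsto_of_tendsto_of_le_of_le'
          (tendsto_const_nhds (x := u)) hh
        · filter_upwards [self_mem_nhdsWithin] with x hx
          have hs : 0 < x - 1 := by have : (1:ℝ) < x := hx; linarith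
          have h := Nat.le_ceil (u/(x-1))
          have := (div_le_iff₀ hs).mp h
          linarith
        · filter_upwards [self_mem_nhdsWithin] with x hx
          have hs : 0 < x - 1 := by have : (1:ℝ) < x := hx; linarith
          have h : (⌈u/(x-1)⌉₊:ℝ) < u/(x-1) + 1 := Nat.ceil_lt_add_one (by positivity)
          have h3 : (x-1) * (⌈u/(x-1)⌉₊:ℝ) < (x-1) * (u/(x-1) + 1) :=
            mul_lt_mul_of_pos_left h hs
          have h4 : (x-1) * (u/(x-1) + 1) = u + (x-1) := by field_simp
          linarith
      have hslope : Tendsto (fun x : ℝ => Real.log x / (x-1)) (𝓝[>] (1:ℝ)) (𝓝 1) := by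
        have hd : HasDerivAt Real.log 1 1 := by
          simpa using Real.hasDerivAt_log one_ne_zero
        have h1 := hasDerivAt_iff_tendsto_slope.mp hd
        have h2 := h1.mono_left (nhdsWithin_mono 1 (fun y hy => ne_of_gt hy))
        apply h2.congr
        intro y
        rw [slope_def_field]
        simp [Real.log_one]
      have hB : Tendsto (fun x : ℝ => (⌈u/(x-1)⌉₊:ℝ) * Real.log x) (𝓝[>] (1:ℝ)) (𝓝 u) := by
        have hprod := hA.mul hslope
        rw [mul_one] at hprod
        apply hprod.congr'
        filter_upwards [self_mem_nhdsWithin] with x hx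
        have hs : x - 1 ≠ 0 := by have : (1:ℝ) < x := hx; intro h; linarith [sub_eq_zero.mp h]
        field_simp
      have hexp : Tendsto (fun x : ℝ => Real.exp (-(⌈u/(x-1)⌉₊:ℝ) * Real.log x))
          (𝓝[>] (1:ℝ)) (𝓝 (Real.exp (-u))) := by
        have := (Real.continuous_exp.tendsto (-u)).comp hB.neg
        apply this.congr
        intro x
        simp [neg_mul]
      have hpow : Tendsto (fun x : ℝ => ((x-1) * (⌈u/(x-1)⌉₊:ℝ)) ^ (α-1))
          (𝓝[>] (1:ℝ)) (𝓝 (u ^ (α-1))) :=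
        ((Real.continuousAt_rpow_const u (α-1) (Or.inl hu0.ne')).tendsto).comp hA
      exact hexp.mul hpow
  rw [Real.Gamma_eq_integral (by linarith : (0:ℝ) < α)]
  apply Tendsto.congr' ?_ hdct
  filter_upwards [Ioc_mem_nhdsGT one_lt_two] with x hx
  exact (heq x hx).symm

lemma darboux_lemE (α : ℝ) (hα : 1 ≤ α) (ε : ℕ → ℝ) (hε0 : ∀ p, 0 ≤ ε p)
    (hε : Tendsto ε atTop (𝓝 0)) :
    Tendsto (fun x : ℝ => (x-1)^α * ∑' p : ℕ, ε (p+1) * (((p:ℝ)+1)^(α-1) * (1/x)^(p+1)))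
      (𝓝[>] (1:ℝ)) (𝓝 0) := by
  rw [NormedAddCommGroup.tendsto_nhds_zero]
  intro δ hδ
  have hG : (0:ℝ) < Real.Gamma α := Real.Gamma_pos_of_pos (by linarith)
  set G : ℝ := Real.Gamma α with hG_def
  set η : ℝ := δ / (2*(G + 1)) with hη_def
  have hη : 0 < η := by positivity
  obtain ⟨N, hN⟩ := Filter.eventually_atTop.mp (hε.eventually (gt_mem_nhds hη))
  set K : ℝ := ∑ i ∈ Finset.range N, ε (i+1) * ((i:ℝ)+1)^(α-1) with hK_def
  have hK0 : 0 ≤ K :=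
    Finset.sum_nonneg (fun i _ => mul_nonneg (hε0 _) (Real.rpow_nonneg (by positivity) _))
  have hev1 : ∀ᶠ x in 𝓝[>] (1:ℝ),
      (x-1)^α * ∑' p : ℕ, ((p:ℝ)+1)^(α-1) * (1/x)^(p+1) < G + 1 :=
    (darboux_lemK α hα).eventually (gt_mem_nhds (by linarith))
  have hev2 : ∀ᶠ x in 𝓝[>] (1:ℝ), (x-1)^α < δ/(2*(K+1)) :=
    (darboux_tendsto_rpow α (by linarith)).eventually (gt_mem_nhds (by positivity))
  filter_upwards [hev1, hev2, self_mem_nhdsWithin] with x h1 h2 hx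
  have hx1 : (1:ℝ) < x := hx
  have hs : 0 < x - 1 := by linarith
  have hr0 : (0:ℝ) < 1/x := by positivity
  have hr1 : 1/x ≤ 1 := by rw [div_le_one (by linarith)]; linarith
  have hSsum : Summable (fun p : ℕ => ((p:ℝ)+1)^(α-1) * (1/x)^(p+1)) := darboux_summable α hx1
  obtain ⟨B, hB⟩ := hε.bddAbove_range
  have hB' : ∀ p, ε p ≤ B := fun p => hB (Set.mem_range_self p)
  have hfsum : Summable (fun p : ℕ => ε (p+1) * (((p:ℝ)+1)^(α-1) * (1/x)^(p+1))) := by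
    apply Summable.of_nonneg_of_le
      (fun p => mul_nonneg (hε0 _) (mul_nonneg (Real.rpow_nonneg (by positivity) _) (by positivity)))
      (fun p => mul_le_mul_of_nonneg_right (hB' (p+1))
        (mul_nonneg (Real.rpow_nonneg (by positivity) _) (by positivity)))
      (hSsum.mul_left B)
  set T : ℝ := ∑' p : ℕ, ε (p+1) * (((p:ℝ)+1)^(α-1) * (1/x)^(p+1)) with hT_def
  set Sfull : ℝ := ∑' p : ℕ, ((p:ℝ)+1)^(α-1) * (1/x)^(p+1) with hS_def
  have hT_nonneg : 0 ≤ T := tsum_nonneg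
    (fun p => mul_nonneg (hε0 _) (mul_nonneg (Real.rpow_nonneg (by positivity) _) (by positivity)))
  have hsα : (0:ℝ) ≤ (x-1)^α := Real.rpow_nonneg hs.le _
  rw [Real.norm_eq_abs, abs_of_nonneg (mul_nonneg hsα hT_nonneg)]
  -- split the sum at N
  have hsplitT := Summable.sum_add_tsum_nat_add (f := fun p : ℕ => ε (p+1) * (((p:ℝ)+1)^(α-1) * (1/x)^(p+1)))
    N hfsum
  have hsplitS := Summable.sum_add_tsum_nat_add (f := fun p : ℕ => ((p:ℝ)+1)^(α-1) * (1/x)^(p+1)) N hSsum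
  set H : ℝ := ∑ i ∈ Finset.range N, ε (i+1) * (((i:ℝ)+1)^(α-1) * (1/x)^(i+1)) with hH_def
  set Ttail : ℝ := ∑' i : ℕ, ε ((i+N)+1) * ((((i+N:ℕ)):ℝ)+1)^(α-1) * (1/x)^((i+N)+1) with hTt
  have hT_eq : T = H + ∑' i : ℕ, ε ((i+N)+1) * ((((i+N:ℕ)):ℝ)+1)^(α-1) * (1/x)^((i+N)+1) := by
    rw [hT_def, ← hsplitT]
    congr 1
    apply tsum_congr
    intro i
    push_cast
    ring
  have hStail_le : (∑' i : ℕ, ((((i+N:ℕ)):ℝ)+1)^(α-1) * (1/x)^((i+N)+1)) ≤ Sfull := by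
    rw [hS_def, ← hsplitS]
    have hhead : 0 ≤ ∑ i ∈ Finset.range N, ((i:ℝ)+1)^(α-1) * (1/x)^(i+1) :=
      Finset.sum_nonneg (fun i _ => mul_nonneg (Real.rpow_nonneg (by positivity) _) (by positivity))
    have : (∑' i : ℕ, ((((i+N:ℕ)):ℝ)+1)^(α-1) * (1/x)^((i+N)+1))
        = ∑' i : ℕ, ((((i:ℕ)+N:ℕ):ℝ)+1)^(α-1) * (1/x)^((i+N)+1) := by push_cast; ring_nf
    linarith [this]
  have hTail_le : Ttail ≤ η * ∑' i : ℕ, ((((i+N:ℕ)):ℝ)+1)^(α-1) * (1/x)^((i+N)+1) := by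
    rw [hTt, ← tsum_mul_left]
    apply Summable.tsum_le_tsum
    · intro i
      have hεlt : ε ((i+N)+1) ≤ η := (hN ((i+N)+1) (by omega)).le
      have hnn : (0:ℝ) ≤ ((((i+N:ℕ)):ℝ)+1)^(α-1) * (1/x)^((i+N)+1) :=
        mul_nonneg (Real.rpow_nonneg (by positivity) _) (by positivity)
      calc ε ((i+N)+1) * ((((i+N:ℕ)):ℝ)+1)^(α-1) * (1/x)^((i+N)+1)
          = ε ((i+N)+1) * (((((i+N:ℕ)):ℝ)+1)^(α-1) * (1/x)^((i+N)+1)) := by ring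
        _ ≤ η * (((((i+N:ℕ)):ℝ)+1)^(α-1) * (1/x)^((i+N)+1)) :=
            mul_le_mul_of_nonneg_right hεlt hnn
    · apply Summable.congr ((summable_nat_add_iff N).mpr hfsum)
      intro i; push_cast; ring
    · exact (((summable_nat_add_iff N).mpr hSsum).congr (by intro i; push_cast; ring)).mul_left η
  have hH_le : H ≤ K := by
    rw [hH_def, hK_def]
    apply Finset.sum_le_sum
    intro i _
    have h1 : (1/x:ℝ)^(i+1) ≤ 1 := pow_le_one₀ hr0.le hr1
    have hnn : (0:ℝ) ≤ ε (i+1) * ((i:ℝ)+1)^(α-1) :=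
      mul_nonneg (hε0 _) (Real.rpow_nonneg (by positivity) _)
    calc ε (i+1) * (((i:ℝ)+1)^(α-1) * (1/x)^(i+1))
        = (ε (i+1) * ((i:ℝ)+1)^(α-1)) * (1/x)^(i+1) := by ring
      _ ≤ (ε (i+1) * ((i:ℝ)+1)^(α-1)) * 1 := mul_le_mul_of_nonneg_left h1 hnn
      _ = ε (i+1) * ((i:ℝ)+1)^(α-1) := by ring
  have hSfull_nonneg : 0 ≤ Sfull := tsum_nonneg
    (fun p => mul_nonneg (Real.rpow_nonneg (by positivity) _) (by positivity))
  -- combine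
  have hηG : η * (G + 1) = δ/2 := by
    rw [hη_def]; field_simp
  have hfinal1 : (x-1)^α * H ≤ δ/(2*(K+1)) * K :=
    le_trans (mul_le_mul_of_nonneg_left hH_le hsα) (mul_le_mul_of_nonneg_right h2.le hK0)
  have hfinal2 : δ/(2*(K+1)) * K < δ/2 := by
    rw [div_mul_eq_mul_div, div_lt_div_iff₀ (by positivity) (by norm_num)]
    nlinarith
  have hfinal3 : (x-1)^α * Ttail < δ/2 := by
    have hstep : (x-1)^α * Ttail ≤ η * ((x-1)^α * Sfull) := by
      have := mul_le_mul_of_nonneg_left (le_trans hTail_le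
        (mul_le_mul_of_nonneg_left hStail_le hη.le)) hsα
      nlinarith
    have : η * ((x-1)^α * Sfull) < η * (G+1) := mul_lt_mul_of_pos_left h1 hη
    linarith [hηG]
  have hmul : (x-1)^α * T = (x-1)^α * H + (x-1)^α * Ttail := by
    rw [hT_eq, hTt]; ring
  linarith

lemma darboux_cpow_neg_nat {x : ℝ} (hx : 0 < x) (n : ℕ) :
    (x:ℂ) ^ (-(n:ℂ)) = (((1/x)^n : ℝ) : ℂ) := by
  rw [Complex.cpow_neg, Complex.cpow_natCast]
  push_cast
  rw [one_div, inv_pow]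

lemma darboux_norm_cpow_neg_nat {x : ℝ} (hx : 0 < x) (n : ℕ) :
    ‖(x:ℂ) ^ (-(n:ℂ))‖ = (1/x)^n := by
  rw [darboux_cpow_neg_nat hx n, Complex.norm_real, Real.norm_eq_abs,
    abs_of_nonneg (by positivity)]

lemma darboux_ofReal_term (α : ℝ) {x : ℝ} (hx : 0 < x) (p : ℕ) :
    ((((p:ℝ)+1)^(α-1) * (1/x)^(p+1) : ℝ) : ℂ)
      = ((p+1:ℕ):ℂ)^((α:ℂ)-1) * (x:ℂ)^(-((p+1:ℕ):ℂ)) := by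
  rw [Complex.ofReal_mul]
  congr 1
  · have h0 : ((p+1:ℕ):ℂ) = (((p:ℝ)+1 : ℝ) : ℂ) := by push_cast; ring
    rw [h0, show ((α:ℂ)-1) = ((α-1 : ℝ):ℂ) by push_cast; ring,
      ← Complex.ofReal_cpow (by positivity : (0:ℝ) ≤ (p:ℝ)+1)]
  · rw [darboux_cpow_neg_nat hx (p+1)]

lemma darboux_core (α : ℝ) (hα : 1 ≤ α) (L : ℂ) (b : ℕ → ℂ)
    (hb : Tendsto (fun p : ℕ => (p:ℂ)^((1:ℂ) - (α:ℂ)) * b p) atTop (𝓝 L)) :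
    (∀ x : ℝ, 1 < x → Summable fun p : ℕ => b p * (x:ℂ)^(-(p:ℂ))) ∧
    Tendsto (fun x : ℝ => ((x - 1 : ℝ):ℂ)^(α:ℂ) * ∑' p : ℕ, b p * (x:ℂ)^(-(p:ℂ)))
      (𝓝[>] (1:ℝ)) (𝓝 (L * Complex.Gamma (α:ℂ))) := by
  -- boundedness of the normalized sequence
  obtain ⟨M, hM⟩ := (hb.norm).bddAbove_range
  have hM' : ∀ p : ℕ, ‖(p:ℂ)^((1:ℂ)-(α:ℂ)) * b p‖ ≤ M := fun p => hM (Set.mem_range_self p)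
  have hbnorm : ∀ p : ℕ, 1 ≤ p → ‖b p‖ ≤ M * (p:ℝ)^(α-1) := by
    intro p hp
    have hp0 : (0:ℝ) < (p:ℝ) := by exact_mod_cast hp
    have h1 : ‖(p:ℂ)^((1:ℂ)-(α:ℂ))‖ = (p:ℝ)^(1-α) := by
      rw [show ((p:ℕ):ℂ) = (((p:ℝ)):ℂ) by push_cast; ring,
        Complex.norm_cpow_eq_rpow_re_of_pos hp0]
      norm_num
    have h2 := hM' p
    rw [norm_mul, h1] at h2
    have h3 : (p:ℝ)^(1-α) * (p:ℝ)^(α-1) = 1 := by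
      rw [← Real.rpow_add hp0]; norm_num
    have h4 : (0:ℝ) ≤ (p:ℝ)^(α-1) := (Real.rpow_pos_of_pos hp0 _).le
    calc ‖b p‖ = ((p:ℝ)^(1-α) * ‖b p‖) * (p:ℝ)^(α-1) := by
          rw [mul_comm ((p:ℝ)^(1-α)) ‖b p‖, mul_assoc, h3, mul_one]
      _ ≤ M * (p:ℝ)^(α-1) := mul_le_mul_of_nonneg_right h2 h4
  -- summability
  have hsum : ∀ x : ℝ, 1 < x → Summable fun p : ℕ => b p * (x:ℂ)^(-(p:ℂ)) := by
    intro x hx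
    have hx0 : (0:ℝ) < x := by linarith
    apply Summable.of_norm
    have hnorm_eq : ∀ p : ℕ, ‖b p * (x:ℂ)^(-(p:ℂ))‖ = ‖b p‖ * (1/x)^p := by
      intro p; rw [norm_mul, darboux_norm_cpow_neg_nat hx0 p]
    rw [summable_congr hnorm_eq]
    apply (summable_nat_add_iff 1).mp
    refine Summable.of_nonneg_of_le
      (fun p => mul_nonneg (norm_nonneg _) (pow_nonneg (one_div_nonneg.mpr hx0.le) _))
      (fun p => ?_) (((darboux_summable α hx)).mul_left M)
    have h1 : ‖b (p+1)‖ ≤ M * ((p:ℝ)+1)^(α-1) := by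
      have := hbnorm (p+1) (Nat.le_add_left 1 p)
      push_cast at this ⊢
      exact this
    have h2 : (0:ℝ) ≤ (1/x)^(p+1) := by positivity
    calc ‖b (p+1)‖ * (1/x)^(p+1) ≤ (M * ((p:ℝ)+1)^(α-1)) * (1/x)^(p+1) :=
          mul_le_mul_of_nonneg_right h1 h2
      _ = M * (((p:ℝ)+1)^(α-1) * (1/x)^(p+1)) := by ring
  refine ⟨hsum, ?_⟩
  -- error sequence
  set e : ℕ → ℂ := fun p => (p:ℂ)^((1:ℂ)-(α:ℂ)) * b p - L with he_def
  have he : Tendsto e atTop (𝓝 0) := by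
    have := hb.sub (tendsto_const_nhds (x := L))
    simpa using this
  obtain ⟨B, hB⟩ := (he.norm).bddAbove_range
  have hB' : ∀ p, ‖e p‖ ≤ B := fun p => hB (Set.mem_range_self p)
  have hb' : ∀ p : ℕ, b (p+1) = (L + e (p+1)) * ((p+1:ℕ):ℂ)^((α:ℂ)-1) := by
    intro p
    have hne : ((p+1:ℕ):ℂ) ≠ 0 := Nat.cast_ne_zero.mpr (Nat.succ_ne_zero p)
    have h1 : ((p+1:ℕ):ℂ)^((1:ℂ)-(α:ℂ)) * ((p+1:ℕ):ℂ)^((α:ℂ)-1) = 1 := by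
      rw [← Complex.cpow_add _ _ hne, show ((1:ℂ)-(α:ℂ)) + ((α:ℂ)-1) = 0 by ring,
        Complex.cpow_zero]
    have h2 : (L + e (p+1)) = ((p+1:ℕ):ℂ)^((1:ℂ)-(α:ℂ)) * b (p+1) := by
      rw [he_def]; ring
    rw [h2, mul_comm (((p+1:ℕ):ℂ)^((1:ℂ)-(α:ℂ))) (b (p+1)), mul_assoc, h1, mul_one]
  -- the three pieces
  have hA_norm : ∀ x : ℝ, 1 < x → ‖((x - 1 : ℝ):ℂ)^(α:ℂ)‖ = (x-1)^α := by
    intro x hx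
    rw [Complex.norm_cpow_eq_rpow_re_of_pos (by linarith : (0:ℝ) < x-1)]
    norm_num
  have hA_ofReal : ∀ x : ℝ, 1 < x → ((x - 1 : ℝ):ℂ)^(α:ℂ) = (((x-1)^α : ℝ) : ℂ) := by
    intro x hx
    rw [Complex.ofReal_cpow (by linarith : (0:ℝ) ≤ x-1)]
  -- summability of the model complex series and the error series, for x > 1
  have hSc_sum : ∀ x : ℝ, 1 < x →
      Summable (fun p : ℕ => ((p+1:ℕ):ℂ)^((α:ℂ)-1) * (x:ℂ)^(-((p+1:ℕ):ℂ))) := by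
    intro x hx
    have hx0 : (0:ℝ) < x := by linarith
    have := (Complex.summable_ofReal (f := fun p : ℕ => ((p:ℝ)+1)^(α-1) * (1/x)^(p+1))).mpr
      (darboux_summable α hx)
    apply this.congr
    intro p
    exact darboux_ofReal_term α hx0 p
  have hW_sum : ∀ x : ℝ, 1 < x →
      Summable (fun p : ℕ => e (p+1) * (((p+1:ℕ):ℂ)^((α:ℂ)-1) * (x:ℂ)^(-((p+1:ℕ):ℂ)))) := by
    intro x hx
    have hx0 : (0:ℝ) < x := by linarith
    apply Summable.of_norm
    have hne : ∀ p : ℕ, ‖e (p+1) * (((p+1:ℕ):ℂ)^((α:ℂ)-1) * (x:ℂ)^(-((p+1:ℕ):ℂ)))‖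
        = ‖e (p+1)‖ * (((p:ℝ)+1)^(α-1) * (1/x)^(p+1)) := by
      intro p
      rw [norm_mul, ← darboux_ofReal_term α hx0 p, Complex.norm_real, Real.norm_eq_abs,
        abs_of_nonneg (by positivity)]
    rw [summable_congr hne]
    refine Summable.of_nonneg_of_le
      (fun p => mul_nonneg (norm_nonneg _)
        (mul_nonneg (Real.rpow_nonneg (by positivity) _)
          (pow_nonneg (one_div_nonneg.mpr hx0.le) _)))
      (fun p => ?_) ((darboux_summable α hx).mul_left B)
    exact mul_le_mul_of_nonneg_right (hB' (p+1))
      (mul_nonneg (Real.rpow_nonneg (by positivity) _)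
        (pow_nonneg (one_div_nonneg.mpr hx0.le) _))
  -- eventual identity
  have hEq : ∀ᶠ x in 𝓝[>] (1:ℝ),
      ((x - 1 : ℝ):ℂ)^(α:ℂ) * ∑' p : ℕ, b p * (x:ℂ)^(-(p:ℂ))
      = ((x - 1 : ℝ):ℂ)^(α:ℂ) * b 0
        + L * (((x - 1 : ℝ):ℂ)^(α:ℂ) *
            ∑' p : ℕ, ((p+1:ℕ):ℂ)^((α:ℂ)-1) * (x:ℂ)^(-((p+1:ℕ):ℂ)))
        + ((x - 1 : ℝ):ℂ)^(α:ℂ) *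
            ∑' p : ℕ, e (p+1) * (((p+1:ℕ):ℂ)^((α:ℂ)-1) * (x:ℂ)^(-((p+1:ℕ):ℂ))) := by
    filter_upwards [self_mem_nhdsWithin] with x hx
    have hx1 : (1:ℝ) < x := hx
    have hT := Summable.tsum_eq_zero_add (hsum x hx1)
    have hzero : (x:ℂ)^(-((0:ℕ):ℂ)) = 1 := by norm_num
    rw [hT, hzero, mul_one]
    have hsplit : ∑' p : ℕ, b (p+1) * (x:ℂ)^(-((p+1:ℕ):ℂ))
        = L * (∑' p : ℕ, ((p+1:ℕ):ℂ)^((α:ℂ)-1) * (x:ℂ)^(-((p+1:ℕ):ℂ)))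
          + ∑' p : ℕ, e (p+1) * (((p+1:ℕ):ℂ)^((α:ℂ)-1) * (x:ℂ)^(-((p+1:ℕ):ℂ))) := by
      rw [← tsum_mul_left, ← Summable.tsum_add ((hSc_sum x hx1).mul_left L) (hW_sum x hx1)]
      apply tsum_congr
      intro p
      rw [hb' p]
      ring
    rw [hsplit]
    ring
  -- limits of the three pieces
  have t1 : Tendsto (fun x : ℝ => ((x - 1 : ℝ):ℂ)^(α:ℂ) * b 0) (𝓝[>] (1:ℝ)) (𝓝 0) := by
    apply squeeze_zero_norm' (a := fun x : ℝ => (x-1)^α * ‖b 0‖)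
    · filter_upwards [self_mem_nhdsWithin] with x hx
      rw [norm_mul, hA_norm x hx]
    · have := (darboux_tendsto_rpow α (by linarith)).mul_const ‖b 0‖
      simpa using this
  have t2 : Tendsto (fun x : ℝ => L * (((x - 1 : ℝ):ℂ)^(α:ℂ) *
      ∑' p : ℕ, ((p+1:ℕ):ℂ)^((α:ℂ)-1) * (x:ℂ)^(-((p+1:ℕ):ℂ))))
      (𝓝[>] (1:ℝ)) (𝓝 (L * Complex.Gamma (α:ℂ))) := by
    apply Tendsto.const_mul
    have hreal : Tendsto (fun x : ℝ => (((x-1)^α * ∑' p : ℕ, ((p:ℝ)+1)^(α-1) * (1/x)^(p+1) : ℝ) : ℂ))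
        (𝓝[>] (1:ℝ)) (𝓝 ((Real.Gamma α : ℝ) : ℂ)) :=
      (Complex.continuous_ofReal.tendsto _).comp (darboux_lemK α hα)
    rw [show ((Real.Gamma α : ℝ) : ℂ) = Complex.Gamma (α:ℂ) from (Complex.Gamma_ofReal α).symm]
      at hreal
    apply Tendsto.congr' ?_ hreal
    filter_upwards [self_mem_nhdsWithin] with x hx
    have hx1 : (1:ℝ) < x := hx
    have hx0 : (0:ℝ) < x := by linarith
    rw [Complex.ofReal_mul, ← hA_ofReal x hx1, Complex.ofReal_tsum]
    congr 1
    apply tsum_congr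
    intro p
    exact darboux_ofReal_term α hx0 p
  have t3 : Tendsto (fun x : ℝ => ((x - 1 : ℝ):ℂ)^(α:ℂ) *
      ∑' p : ℕ, e (p+1) * (((p+1:ℕ):ℂ)^((α:ℂ)-1) * (x:ℂ)^(-((p+1:ℕ):ℂ))))
      (𝓝[>] (1:ℝ)) (𝓝 0) := by
    apply squeeze_zero_norm'
      (a := fun x : ℝ => (x-1)^α * ∑' p : ℕ, ‖e (p+1)‖ * (((p:ℝ)+1)^(α-1) * (1/x)^(p+1)))
    · filter_upwards [self_mem_nhdsWithin] with x hx
      have hx1 : (1:ℝ) < x := hx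
      have hx0 : (0:ℝ) < x := by linarith
      rw [norm_mul, hA_norm x hx1]
      apply mul_le_mul_of_nonneg_left ?_ (Real.rpow_nonneg (by linarith) α)
      have hne : ∀ p : ℕ, ‖e (p+1) * (((p+1:ℕ):ℂ)^((α:ℂ)-1) * (x:ℂ)^(-((p+1:ℕ):ℂ)))‖
          = ‖e (p+1)‖ * (((p:ℝ)+1)^(α-1) * (1/x)^(p+1)) := by
        intro p
        rw [norm_mul, ← darboux_ofReal_term α hx0 p, Complex.norm_real, Real.norm_eq_abs,
          abs_of_nonneg (by positivity)]
      calc ‖∑' p : ℕ, e (p+1) * (((p+1:ℕ):ℂ)^((α:ℂ)-1) * (x:ℂ)^(-((p+1:ℕ):ℂ)))‖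
          ≤ ∑' p : ℕ, ‖e (p+1) * (((p+1:ℕ):ℂ)^((α:ℂ)-1) * (x:ℂ)^(-((p+1:ℕ):ℂ)))‖ :=
            norm_tsum_le_tsum_norm (by
              rw [summable_congr hne]
              refine Summable.of_nonneg_of_le
                (fun p => mul_nonneg (norm_nonneg _)
                  (mul_nonneg (Real.rpow_nonneg (by positivity) _)
                    (pow_nonneg (one_div_nonneg.mpr hx0.le) _)))
                (fun p => ?_) ((darboux_summable α hx1).mul_left B)
              exact mul_le_mul_of_nonneg_right (hB' (p+1))
                (mul_nonneg (Real.rpow_nonneg (by positivity) _)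
                  (pow_nonneg (one_div_nonneg.mpr hx0.le) _)))
        _ = ∑' p : ℕ, ‖e (p+1)‖ * (((p:ℝ)+1)^(α-1) * (1/x)^(p+1)) := tsum_congr hne
    · exact darboux_lemE α hα (fun p => ‖e p‖) (fun p => norm_nonneg _)
        (by simpa using he.norm)
  have hg := (t1.add t2).add t3
  rw [show (0 : ℂ) + L * Complex.Gamma (α:ℂ) + 0 = L * Complex.Gamma (α:ℂ) by ring] at hg
  exact hg.congr' (by filter_upwards [hEq] with x h; exact h.symm)

/-- **Darboux's method along a ray.** If
`p^{1−α}·(v_s−v_t)^{−p−β}·c_p → C·(v_s−v_t)^{−α}`, then for every `x > 1` the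
series `f(x) = Σ_p c_p·x^{−p−β}·(v_s−v_t)^{−p−β}` converges absolutely, and
`(x−1)^α·(v_s−v_t)^α·f(x) → C·Γ(α)` as `x → 1⁺`. -/
theorem darboux_ray
    (α : ℝ) (hα : 1 ≤ α) (β C : ℂ) (vs vt : ℂ) (hvst : vs ≠ vt)
    (θ : ℝ)
    (hθ : vs - vt = ((‖vs - vt‖ : ℝ) : ℂ) * Complex.exp ((θ : ℂ) * Complex.I))
    (c : ℕ → ℂ)
    (hlim : Tendsto
      (fun p : ℕ =>
        (p : ℂ) ^ ((1 : ℂ) - (α : ℂ)) * cpowArg (vs - vt) θ (-(p : ℂ) - β) * c p)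
      atTop (𝓝 (C * cpowArg (vs - vt) θ (-(α : ℂ))))) :
    (∀ x : ℝ, 1 < x →
      Summable fun p : ℕ =>
        c p * (x : ℂ) ^ (-(p : ℂ) - β) * cpowArg (vs - vt) θ (-(p : ℂ) - β)) ∧
    Tendsto
      (fun x : ℝ =>
        ((x - 1 : ℝ) : ℂ) ^ (α : ℂ) * cpowArg (vs - vt) θ (α : ℂ) *
          ∑' p : ℕ, c p * (x : ℂ) ^ (-(p : ℂ) - β) * cpowArg (vs - vt) θ (-(p : ℂ) - β))
      (𝓝[Set.Ioi (1 : ℝ)] 1) (𝓝 (C * Complex.Gamma (α : ℂ))) := by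
  have hDadd : ∀ y z : ℂ,
      cpowArg (vs-vt) θ y * cpowArg (vs-vt) θ z = cpowArg (vs-vt) θ (y+z) := by
    intro y z
    unfold cpowArg
    rw [← Complex.exp_add]
    ring_nf
  have hDinv : cpowArg (vs-vt) θ (-(α:ℂ)) * cpowArg (vs-vt) θ (α:ℂ) = 1 := by
    rw [hDadd, neg_add_cancel]
    unfold cpowArg
    rw [zero_mul, Complex.exp_zero]
  set b : ℕ → ℂ := fun p => cpowArg (vs-vt) θ (-(p:ℂ) - β) * c p with hb_def
  have hb : Tendsto (fun p : ℕ => (p:ℂ)^((1:ℂ)-(α:ℂ)) * b p) atTop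
      (𝓝 (C * cpowArg (vs-vt) θ (-(α:ℂ)))) := by
    apply hlim.congr
    intro p
    rw [hb_def]
    ring
  obtain ⟨hsum, hlim2⟩ := darboux_core α hα (C * cpowArg (vs-vt) θ (-(α:ℂ))) b hb
  have hterm : ∀ x : ℝ, 1 < x → ∀ p : ℕ,
      b p * (x:ℂ)^(-(p:ℂ)) * (x:ℂ)^(-β)
        = c p * (x:ℂ)^(-(p:ℂ) - β) * cpowArg (vs-vt) θ (-(p:ℂ) - β) := by
    intro x hx p
    have hx0 : (x:ℂ) ≠ 0 := by
      simp only [ne_eq, Complex.ofReal_eq_zero]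
      linarith
    rw [show (-(p:ℂ) - β) = (-(p:ℂ)) + (-β) by ring, Complex.cpow_add _ _ hx0, hb_def]
    ring
  constructor
  · intro x hx
    apply ((hsum x hx).mul_right ((x:ℂ)^(-β))).congr
    intro p
    exact hterm x hx p
  · have hcont : Tendsto (fun x : ℝ => (x:ℂ)^(-β)) (𝓝[>] (1:ℝ)) (𝓝 1) := by
      have hc : ContinuousAt (fun z : ℂ => z ^ (-β)) (((1:ℝ):ℂ)) :=
        continuousAt_cpow_const (by simp [Complex.slitPlane])
      have hc2 : ContinuousAt (fun x : ℝ => (x:ℂ)^(-β)) 1 :=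
        hc.comp Complex.continuous_ofReal.continuousAt
      have h3 := hc2.tendsto
      simp only [Complex.ofReal_one, Complex.one_cpow] at h3
      exact h3.mono_left nhdsWithin_le_nhds
    have h2 : Tendsto (fun x : ℝ => cpowArg (vs-vt) θ (α:ℂ) * (x:ℂ)^(-β)) (𝓝[>] (1:ℝ))
        (𝓝 (cpowArg (vs-vt) θ (α:ℂ) * 1)) := hcont.const_mul _
    have hfin := hlim2.mul h2
    have hval : C * cpowArg (vs-vt) θ (-(α:ℂ)) * Complex.Gamma (α:ℂ)
        * (cpowArg (vs-vt) θ (α:ℂ) * 1) = C * Complex.Gamma (α:ℂ) := by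
      linear_combination (C * Complex.Gamma (α:ℂ)) * hDinv
    rw [hval] at hfin
    apply hfin.congr'
    filter_upwards [self_mem_nhdsWithin] with x hx
    have hx1 : (1:ℝ) < x := hx
    have hts : ∑' p : ℕ, c p * (x:ℂ)^(-(p:ℂ) - β) * cpowArg (vs-vt) θ (-(p:ℂ) - β)
        = (∑' p : ℕ, b p * (x:ℂ)^(-(p:ℂ))) * (x:ℂ)^(-β) := by
      rw [← tsum_mul_right]
      exact (tsum_congr (fun p => (hterm x hx1 p).symm))
    rw [hts]
    ring

end
end
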